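/- arXiv:1112.1548 — 11 statements merged into one kernel-verified Lean document; each statement's English description precedes it below -/
import Mathlib

section
/- There exists a constant C > 0 such that for all sufficiently large natural numbers n there is a 2-coloring of the edges of the complete graph on the vertex set {2, 3, ..., n} in which every monochromatic clique S satisfies ∑_{s ∈ S} 1/log₂ s ≤ C · log₂ log₂ log₂ n. -/
open Finset in
lemma card_ltPairs {α : Type*} [LinearOrder α] [DecidableEq α] (T : Finset α) :
    ((T ×ˢ T).filter fun p => p.1 < p.2).card = T.card.choose 2 := by
  rw [← Sym2.card_image_offDiag]
  apply card_bij (fun p (_ : p ∈ (T ×ˢ T).filter fun p => p.1 < p.2) => Sym2.mk p.1 p.2)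
  · rintro ⟨a, b⟩ hp
    simp only [mem_filter, mem_product] at hp
    exact mem_image.2 ⟨(a, b), mem_offDiag.2 ⟨hp.1.1, hp.1.2, hp.2.ne⟩, rfl⟩
  · rintro ⟨a, b⟩ ha ⟨c, d⟩ hc h
    simp only [mem_filter] at ha hc
    rcases Sym2.eq_iff.1 h with ⟨rfl, rfl⟩ | ⟨rfl, rfl⟩
    · rfl
    · exact absurd ha.2 (not_lt.2 hc.2.le)
  · intro z hz
    rw [mem_image] at hz
    obtain ⟨⟨a, b⟩, hab, rfl⟩ := hz
    rw [mem_offDiag] at hab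
    rcases lt_or_gt_of_ne hab.2.2 with h | h
    · exact ⟨(a, b), mem_filter.2 ⟨mem_product.2 ⟨hab.1, hab.2.1⟩, h⟩, rfl⟩
    · exact ⟨(b, a), mem_filter.2 ⟨mem_product.2 ⟨hab.2.1, hab.1⟩, h⟩, Sym2.eq_swap⟩

open Finset in
/-- Counting: a coloring of `Fin m` pairs with no monochromatic set of size `t`. -/
lemma exists_good_coloring (m t : ℕ)
    (hcount : m.choose t * (2 * 2 ^ (m * m - t.choose 2)) < 2 ^ (m * m)) :
    ∃ g : Fin m × Fin m → Fin 2, ∀ T : Finset (Fin m), T.card = t →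
      ∀ clr : Fin 2, ∃ p ∈ (T ×ˢ T).filter (fun p => p.1 < p.2), g p ≠ clr := by
  classical
  by_contra hcon
  push_neg at hcon
  -- every coloring is "bad"
  set P : Finset (Fin m) → Finset (Fin m × Fin m) :=
    fun T => (T ×ˢ T).filter (fun p => p.1 < p.2) with hP
  set Cyl : Finset (Fin m) → Fin 2 → Finset (Fin m × Fin m → Fin 2) :=
    fun T clr => univ.filter (fun g => ∀ p ∈ P T, g p = clr) with hCyl
  have hcyl_card : ∀ T clr, T.card = t → (Cyl T clr).card ≤ 2 ^ (m * m - t.choose 2) := by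
    intro T clr hT
    have hPcard : (P T).card = t.choose 2 := by rw [hP, card_ltPairs, hT]
    have hinj : ∀ g₁ ∈ Cyl T clr, ∀ g₂ ∈ Cyl T clr,
        (fun p : ((P T)ᶜ : Finset (Fin m × Fin m)) => g₁ p.1) =
        (fun p : ((P T)ᶜ : Finset (Fin m × Fin m)) => g₂ p.1) → g₁ = g₂ := by
      intro g₁ h₁ g₂ h₂ heq
      simp only [hCyl, mem_filter, mem_univ, true_and] at h₁ h₂
      funext p
      by_cases hp : p ∈ P T
      · rw [h₁ p hp, h₂ p hp]
      · exact congrFun heq ⟨p, mem_compl.2 hp⟩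
    have := Finset.card_le_card_of_injOn
      (f := fun g (p : ((P T)ᶜ : Finset (Fin m × Fin m))) => g p.1)
      (fun g _ => mem_univ _) (fun g₁ h₁ g₂ h₂ h => hinj g₁ h₁ g₂ h₂ h)
    refine this.trans ?_
    rw [Finset.card_univ, Fintype.card_fun]
    simp only [Fintype.card_coe, card_compl, Fintype.card_prod, Fintype.card_fin, hPcard,
      Fintype.card_fin]
    exact le_rfl
  -- all colorings lie in the union of cylinders
  have hsub : (univ : Finset (Fin m × Fin m → Fin 2)) ⊆
      (univ.powersetCard t).biUnion (fun T => Cyl T 0 ∪ Cyl T 1) := by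
    intro g _
    obtain ⟨T, hTcard, clr, hclr⟩ := hcon g
    refine mem_biUnion.2 ⟨T, by simp [Finset.mem_powersetCard_univ, hTcard], ?_⟩
    have hg : g ∈ Cyl T clr := by
      simp only [hCyl, mem_filter, mem_univ, true_and]
      exact hclr
    fin_cases clr
    · exact mem_union_left _ hg
    · exact mem_union_right _ hg
  have hcard := Finset.card_le_card hsub
  simp only [Finset.card_univ, Fintype.card_fun, Fintype.card_prod, Fintype.card_fin] at hcard
  have hbound : ((univ.powersetCard t : Finset (Finset (Fin m))).biUnion
      (fun T => Cyl T 0 ∪ Cyl T 1)).card ≤ m.choose t * (2 * 2 ^ (m * m - t.choose 2)) := by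
    refine (Finset.card_biUnion_le).trans ?_
    have : ∀ T ∈ (univ.powersetCard t : Finset (Finset (Fin m))),
        (Cyl T 0 ∪ Cyl T 1).card ≤ 2 * 2 ^ (m * m - t.choose 2) := by
      intro T hT
      rw [Finset.mem_powersetCard_univ] at hT
      calc (Cyl T 0 ∪ Cyl T 1).card ≤ (Cyl T 0).card + (Cyl T 1).card := card_union_le _ _
        _ ≤ 2 ^ (m * m - t.choose 2) + 2 ^ (m * m - t.choose 2) :=
            Nat.add_le_add (hcyl_card T 0 hT) (hcyl_card T 1 hT)
        _ = 2 * 2 ^ (m * m - t.choose 2) := by ring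
    calc ∑ T ∈ univ.powersetCard t, (Cyl T 0 ∪ Cyl T 1).card
        ≤ ∑ T ∈ univ.powersetCard t, 2 * 2 ^ (m * m - t.choose 2) := Finset.sum_le_sum this
      _ = m.choose t * (2 * 2 ^ (m * m - t.choose 2)) := by
          rw [Finset.sum_const, Finset.card_powersetCard, Finset.card_univ, Fintype.card_fin,
            smul_eq_mul]
  omega


lemma count_numeric (m : ℕ) :
    m.choose (2 * Nat.clog 2 m + 3) *
      (2 * 2 ^ (m * m - (2 * Nat.clog 2 m + 3).choose 2)) < 2 ^ (m * m) := by
  set a := Nat.clog 2 m with ha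
  set t := 2 * a + 3 with ht
  by_cases htm : m < t
  · rw [Nat.choose_eq_zero_of_lt htm]
    simpa using Nat.pos_pow_of_pos (m*m) (by norm_num)
  push_neg at htm
  have hm2 : 2 ≤ m := by omega
  have hma : m ≤ 2 ^ a := Nat.le_pow_clog (by norm_num) m
  have hchoose : m.choose t ≤ 2 ^ (a * t) := by
    calc m.choose t ≤ m ^ t := Nat.choose_le_pow m t
      _ ≤ (2 ^ a) ^ t := Nat.pow_le_pow_left hma t
      _ = 2 ^ (a * t) := by rw [← pow_mul]
  have hc : t.choose 2 = (2 * a + 3) * (a + 1) := by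
    rw [Nat.choose_two_right, ht]
    have h1 : 2 * a + 3 - 1 = 2 * (a + 1) := by omega
    have : (2 * a + 3) * (2 * a + 3 - 1) = 2 * ((2 * a + 3) * (a + 1)) := by rw [h1]; ring
    rw [this, Nat.mul_div_cancel_left _ (by norm_num)]
  have hcle : t.choose 2 ≤ m * m := by
    calc t.choose 2 ≤ t ^ 2 := Nat.choose_le_pow t 2
      _ = t * t := sq t
      _ ≤ m * m := Nat.mul_le_mul htm htm
  have hatc : a * t + 1 < t.choose 2 := by
    rw [hc, ht]; nlinarith
  calc m.choose t * (2 * 2 ^ (m * m - t.choose 2))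
      ≤ 2 ^ (a * t) * (2 * 2 ^ (m * m - t.choose 2)) :=
        Nat.mul_le_mul_right _ hchoose
    _ = 2 ^ (a * t + (m * m - t.choose 2) + 1) := by ring
    _ < 2 ^ (m * m) := by
        apply Nat.pow_lt_pow_right (by norm_num)
        omega

lemma ramsey_coloring (m : ℕ) :
    ∃ f : ℕ → ℕ → Fin 2, ∀ T : Finset ℕ, T ⊆ Finset.range m →
      (∃ clr : Fin 2, ∀ i ∈ T, ∀ j ∈ T, i < j → f i j = clr) →
      T.card ≤ 2 * Nat.clog 2 m + 2 := by
  obtain ⟨g, hg⟩ := exists_good_coloring m (2 * Nat.clog 2 m + 3) (count_numeric m)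
  refine ⟨fun i j => if h : i < m ∧ j < m then g (⟨i, h.1⟩, ⟨j, h.2⟩) else 0, ?_⟩
  intro T hT ⟨clr, hmono⟩
  by_contra hcard
  push_neg at hcard
  obtain ⟨T', hT'sub, hT'card⟩ := Finset.exists_subset_card_eq (s := T) (n := 2 * Nat.clog 2 m + 3)
    (by omega)
  have hT'm : ∀ x ∈ T', x < m := fun x hx =>
    Finset.mem_range.1 (hT (hT'sub hx))
  obtain ⟨⟨i, j⟩, hp, hne⟩ := hg (T'.attachFin hT'm)
    (by rw [Finset.card_attachFin]; exact hT'card) clr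
  simp only [Finset.mem_filter, Finset.mem_product] at hp
  obtain ⟨⟨hi, hj⟩, hij⟩ := hp
  rw [Finset.mem_attachFin] at hi hj
  have hval : (i : ℕ) < (j : ℕ) := hij
  have := hmono i (hT'sub hi) j (hT'sub hj) hval
  apply hne
  rw [← this]
  simp only [dif_pos (And.intro i.isLt j.isLt)]

/-- There is a constant `C > 0` such that for all sufficiently large `n`
there is a 2-coloring of the edges of the complete graph on `{2, ..., n}` in which every
monochromatic clique `S` satisfies `∑_{s ∈ S} 1 / log₂ s ≤ C · log₂ log₂ log₂ n`. -/
theorem weighted_ramsey_upper_bound :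
    ∃ C : ℝ, 0 < C ∧ ∃ N : ℕ, ∀ n : ℕ, N ≤ n →
      ∃ c : ℕ → ℕ → Fin 2,
        ∀ S : Finset ℕ, S ⊆ Finset.Icc 2 n →
          (∃ clr : Fin 2, ∀ i ∈ S, ∀ j ∈ S, i < j → c i j = clr) →
          ∑ s ∈ S, 1 / Real.logb 2 (s : ℝ) ≤
            C * Real.logb 2 (Real.logb 2 (Real.logb 2 (n : ℝ))) := by
  classical
  choose F hF using ramsey_coloring
  refine ⟨18, by norm_num, 2 ^ 2 ^ 16, ?_⟩
  intro n hn
  set k : ℕ → ℕ := fun s => Nat.log 2 (Nat.log 2 s) with hk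
  set K0 : ℕ := Nat.log 2 (Nat.log 2 n) with hK0
  set col : ℕ → ℕ → Fin 2 := fun i j => if k i = k j then F (2 ^ 2 ^ (k i + 1)) i j
    else F (K0 + 1) (k i) (k j) with hcol
  have hcol_eq : ∀ i j, col i j = if k i = k j then F (2 ^ 2 ^ (k i + 1)) i j
      else F (K0 + 1) (k i) (k j) := fun i j => rfl
  refine ⟨col, ?_⟩
  rintro S hS ⟨clr, hmono⟩
  -- basic numeric facts
  have hlogn : 2 ^ 16 ≤ Nat.log 2 n := by
    have := Nat.log_mono_right (b := 2) hn
    rwa [Nat.log_pow (by norm_num)] at this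
  have hK0ge : 16 ≤ K0 := by
    have := Nat.log_mono_right (b := 2) hlogn
    rwa [Nat.log_pow (by norm_num)] at this
  have hkmono : ∀ i j : ℕ, i ≤ j → k i ≤ k j := fun i j h =>
    Nat.log_mono_right (Nat.log_mono_right h)
  have hmemS : ∀ s ∈ S, 2 ≤ s ∧ s ≤ n := fun s hs => Finset.mem_Icc.1 (hS hs)
  have hself : ∀ s : ℕ, 2 ≤ s → s < 2 ^ 2 ^ (k s + 1) := by
    intro s hs2
    have h1 : s < 2 ^ (Nat.log 2 s + 1) := Nat.lt_pow_succ_log_self (by norm_num) s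
    have h2 : Nat.log 2 s < 2 ^ (k s + 1) := Nat.lt_pow_succ_log_self (by norm_num) _
    exact h1.trans_le (Nat.pow_le_pow_right (by norm_num) (by omega))
  have hlogb_pos : ∀ s : ℕ, 2 ≤ s → (0 : ℝ) < Real.logb 2 s := by
    intro s hs2
    exact Real.logb_pos one_lt_two (by exact_mod_cast by omega)
  have hweight : ∀ s : ℕ, 2 ≤ s → 1 / Real.logb 2 s ≤ ((2 : ℝ) ^ k s)⁻¹ := by
    intro s hs2
    have hlog1 : 0 < Nat.log 2 s := Nat.log_pos (by norm_num) hs2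
    have hp : 2 ^ k s ≤ Nat.log 2 s := Nat.pow_log_le_self 2 (by omega)
    have hchain : (2 : ℝ) ^ k s ≤ Real.logb 2 s := by
      calc (2 : ℝ) ^ k s = ((2 ^ k s : ℕ) : ℝ) := by push_cast; ring
        _ ≤ ((Nat.log 2 s : ℕ) : ℝ) := by exact_mod_cast hp
        _ ≤ Real.logb 2 s := Real.natLog_le_logb s 2
    rw [inv_eq_one_div]
    exact one_div_le_one_div_of_le (by positivity) hchain
  -- the index set
  set I : Finset ℕ := S.image k with hI
  have hIsub : I ⊆ Finset.range (K0 + 1) := by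
    intro a ha
    obtain ⟨s, hs, rfl⟩ := Finset.mem_image.1 ha
    exact Finset.mem_range.2 (Nat.lt_succ_of_le (hkmono s n (hmemS s hs).2))
  have hIcard : I.card ≤ 2 * Nat.clog 2 (K0 + 1) + 2 := by
    refine hF (K0 + 1) I hIsub ⟨clr, ?_⟩
    intro a ha b hb hab
    obtain ⟨i, hi, rfl⟩ := Finset.mem_image.1 ha
    obtain ⟨j, hj, rfl⟩ := Finset.mem_image.1 hb
    have hij : i < j := by
      by_contra h
      push_neg at h
      exact absurd (hkmono j i h) (by omega)
    have h := hmono i hi j hj hij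
    rwa [hcol_eq, if_neg (Nat.ne_of_lt hab)] at h
  -- fiber bound
  have hfiber : ∀ a ∈ I, ∑ s ∈ S.filter (fun s => k s = a), 1 / Real.logb 2 (s : ℝ) ≤ 6 := by
    intro a ha
    set T := S.filter (fun s => k s = a) with hT
    have hTsub : T ⊆ Finset.range (2 ^ 2 ^ (a + 1)) := by
      intro s hs
      rw [hT, Finset.mem_filter] at hs
      refine Finset.mem_range.2 ?_
      have := hself s (hmemS s hs.1).1
      rwa [hs.2] at this
    have hTcard : T.card ≤ 2 * 2 ^ (a + 1) + 2 := by
      have := hF (2 ^ 2 ^ (a + 1)) T hTsub ⟨clr, ?_⟩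
      · rwa [Nat.clog_pow _ _ (by norm_num)] at this
      · intro i hi j hj hij
        rw [hT, Finset.mem_filter] at hi hj
        have h := hmono i hi.1 j hj.1 hij
        rwa [hcol_eq, if_pos (by rw [hi.2, hj.2]), hi.2] at h
    have hsum : ∑ s ∈ T, 1 / Real.logb 2 (s : ℝ) ≤ T.card • ((2 : ℝ) ^ a)⁻¹ := by
      refine Finset.sum_le_card_nsmul T _ _ ?_
      intro s hs
      rw [hT, Finset.mem_filter] at hs
      have := hweight s (hmemS s hs.1).1
      rwa [hs.2] at this
    refine hsum.trans ?_
    rw [nsmul_eq_mul]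
    have h2a : (0 : ℝ) < 2 ^ a := by positivity
    have h1a : (1 : ℝ) ≤ 2 ^ a := one_le_pow₀ (by norm_num)
    have hc : (T.card : ℝ) ≤ 2 * 2 ^ (a + 1) + 2 := by
      calc (T.card : ℝ) ≤ ((2 * 2 ^ (a + 1) + 2 : ℕ) : ℝ) := by exact_mod_cast hTcard
        _ = 2 * 2 ^ (a + 1) + 2 := by push_cast; ring
    calc (T.card : ℝ) * ((2 : ℝ) ^ a)⁻¹ ≤ (2 * 2 ^ (a + 1) + 2) * ((2 : ℝ) ^ a)⁻¹ := by
          apply mul_le_mul_of_nonneg_right hc (by positivity)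
      _ ≤ 6 := by
          rw [inv_eq_one_div, mul_one_div, div_le_iff₀ h2a, pow_succ]
          linarith
  -- decompose the sum
  have hdecomp : ∑ s ∈ S, 1 / Real.logb 2 (s : ℝ) =
      ∑ a ∈ I, ∑ s ∈ S.filter (fun s => k s = a), 1 / Real.logb 2 (s : ℝ) :=
    (Finset.sum_fiberwise_of_maps_to (fun s hs => Finset.mem_image_of_mem k hs) _).symm
  have htot : ∑ s ∈ S, 1 / Real.logb 2 (s : ℝ) ≤ 6 * I.card := by
    rw [hdecomp]
    calc ∑ a ∈ I, ∑ s ∈ S.filter (fun s => k s = a), 1 / Real.logb 2 (s : ℝ)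
        ≤ ∑ a ∈ I, (6 : ℝ) := Finset.sum_le_sum hfiber
      _ = 6 * I.card := by rw [Finset.sum_const, nsmul_eq_mul]; ring
  -- analytic bounds on the triple log
  set L : ℝ := Real.logb 2 (Real.logb 2 (Real.logb 2 (n : ℝ))) with hL
  have hb2 : (1 : ℝ) < 2 := one_lt_two
  have hlognR : ((Nat.log 2 n : ℕ) : ℝ) ≤ Real.logb 2 n := Real.natLog_le_logb n 2
  have hlognR_pos : (0 : ℝ) < Nat.log 2 n := by
    have : (0:ℕ) < Nat.log 2 n := by omega
    exact_mod_cast this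
  have hLn_pos : (0 : ℝ) < Real.logb 2 n := lt_of_lt_of_le hlognR_pos hlognR
  have hK0R : (K0 : ℝ) ≤ Real.logb 2 (Real.logb 2 n) := by
    calc (K0 : ℝ) ≤ Real.logb 2 (Nat.log 2 n) := Real.natLog_le_logb _ 2
      _ ≤ Real.logb 2 (Real.logb 2 n) :=
          Real.logb_le_logb_of_le hb2 hlognR_pos hlognR
  have hK0_pos : (0 : ℝ) < (K0 : ℝ) := by
    have : (0:ℕ) < K0 := by omega
    exact_mod_cast this
  have hLLn_pos : (0 : ℝ) < Real.logb 2 (Real.logb 2 n) := lt_of_lt_of_le hK0_pos hK0R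
  have hlogK0 : ((Nat.log 2 K0 : ℕ) : ℝ) ≤ L := by
    calc ((Nat.log 2 K0 : ℕ) : ℝ) ≤ Real.logb 2 K0 := Real.natLog_le_logb _ 2
      _ ≤ L := Real.logb_le_logb_of_le hb2 hK0_pos hK0R
  have hLge : (4 : ℝ) ≤ L := by
    have h1 : (2 : ℝ) ^ (16 : ℕ) ≤ Real.logb 2 n := by
      calc (2 : ℝ) ^ (16 : ℕ) = ((2 ^ 16 : ℕ) : ℝ) := by push_cast; ring
        _ ≤ ((Nat.log 2 n : ℕ) : ℝ) := by exact_mod_cast hlogn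
        _ ≤ Real.logb 2 n := hlognR
    have h2 : (16 : ℝ) ≤ Real.logb 2 (Real.logb 2 n) := by
      calc (16 : ℝ) = Real.logb 2 ((2 : ℝ) ^ (16 : ℕ)) := by
            rw [Real.logb_pow, Real.logb_self_eq_one hb2]; norm_num
        _ ≤ Real.logb 2 (Real.logb 2 n) :=
            Real.logb_le_logb_of_le hb2 (by positivity) h1
    calc (4 : ℝ) = Real.logb 2 ((2 : ℝ) ^ (4 : ℕ)) := by
          rw [Real.logb_pow, Real.logb_self_eq_one hb2]; norm_num
      _ ≤ L := Real.logb_le_logb_of_le hb2 (by positivity) (by norm_num at h2 ⊢; linarith)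
  have hclog : Nat.clog 2 (K0 + 1) ≤ Nat.log 2 K0 + 1 := by
    refine (Nat.clog_le_iff_le_pow (by norm_num)).2 ?_
    have := Nat.lt_pow_succ_log_self (b := 2) (by norm_num) K0
    omega
  have hclogR : (Nat.clog 2 (K0 + 1) : ℝ) ≤ L + 1 := by
    calc (Nat.clog 2 (K0 + 1) : ℝ) ≤ ((Nat.log 2 K0 + 1 : ℕ) : ℝ) := by exact_mod_cast hclog
      _ = ((Nat.log 2 K0 : ℕ) : ℝ) + 1 := by push_cast; ring
      _ ≤ L + 1 := by linarith
  -- finish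
  have hIcardR : (I.card : ℝ) ≤ 2 * (L + 1) + 2 := by
    calc (I.card : ℝ) ≤ ((2 * Nat.clog 2 (K0 + 1) + 2 : ℕ) : ℝ) := by exact_mod_cast hIcard
      _ = 2 * (Nat.clog 2 (K0 + 1) : ℝ) + 2 := by push_cast; ring
      _ ≤ 2 * (L + 1) + 2 := by linarith
  calc ∑ s ∈ S, 1 / Real.logb 2 (s : ℝ) ≤ 6 * I.card := htot
    _ ≤ 6 * (2 * (L + 1) + 2) := by linarith
    _ = 12 * L + 24 := by ring
    _ ≤ 18 * L := by linarith
end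

section
/- For all sufficiently large natural numbers n there exists a 3-coloring of the edges of the complete graph on the vertex set {2, 3, ..., n} in which every monochromatic clique S satisfies ∑_{s ∈ S} 1/log₂ s ≤ 4. -/
open Finset

namespace WRTC

/-- ordered pairs (i,j) with i < j, both in S -/
def pairsOf (S : Finset ℕ) : Finset (ℕ × ℕ) := (S ×ˢ S).filter (fun p => p.1 < p.2)

lemma mem_pairsOf {S : Finset ℕ} {p : ℕ × ℕ} :
    p ∈ pairsOf S ↔ p.1 ∈ S ∧ p.2 ∈ S ∧ p.1 < p.2 := by
  simp [pairsOf, Finset.mem_filter, Finset.mem_product, and_assoc]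

lemma pairsOf_mono {S T : Finset ℕ} (h : S ⊆ T) : pairsOf S ⊆ pairsOf T := by
  intro p hp
  rw [mem_pairsOf] at hp ⊢
  exact ⟨h hp.1, h hp.2.1, hp.2.2⟩

lemma pairsOf_card (S : Finset ℕ) :
    (pairsOf S).card = S.card * (S.card - 1) / 2 := by
  classical
  set G := (S ×ˢ S).filter (fun p => p.2 < p.1) with hG
  have hswap : G.card = (pairsOf S).card := by
    refine Finset.card_bij' (fun p _ => (p.2, p.1)) (fun p _ => (p.2, p.1)) ?_ ?_ ?_ ?_
    all_goals intro p hp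
    · simp only [hG, Finset.mem_filter, Finset.mem_product] at hp
      rw [mem_pairsOf]
      exact ⟨hp.1.2, hp.1.1, hp.2⟩
    · rw [mem_pairsOf] at hp
      simp only [hG, Finset.mem_filter, Finset.mem_product]
      exact ⟨⟨hp.2.1, hp.1⟩, hp.2.2⟩
    · rfl
    · rfl
  have hunion : pairsOf S ∪ G = S.offDiag := by
    ext p
    simp only [Finset.mem_union, mem_pairsOf, hG, Finset.mem_filter, Finset.mem_product,
      Finset.mem_offDiag]
    constructor
    · rintro (⟨h1, h2, h3⟩ | ⟨⟨h1, h2⟩, h3⟩)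
      · exact ⟨h1, h2, Nat.ne_of_lt h3⟩
      · exact ⟨h1, h2, (Nat.ne_of_lt h3).symm⟩
    · rintro ⟨h1, h2, h3⟩
      rcases lt_or_gt_of_ne h3 with h | h
      · exact Or.inl ⟨h1, h2, h⟩
      · exact Or.inr ⟨⟨h1, h2⟩, h⟩
  have hdisj : Disjoint (pairsOf S) G := by
    rw [Finset.disjoint_left]
    intro p hp hpG
    rw [mem_pairsOf] at hp
    simp only [hG, Finset.mem_filter] at hpG
    omega
  have h2 : (pairsOf S).card + (pairsOf S).card = S.card * S.card - S.card := by
    have := Finset.card_union_of_disjoint hdisj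
    rw [hunion, Finset.offDiag_card] at this
    omega
  have h3 : S.card * S.card - S.card = S.card * (S.card - 1) := by
    cases' Nat.eq_zero_or_pos S.card with h h
    · simp [h]
    · have h4 : S.card * S.card = S.card * (S.card - 1) + S.card := by
        have : S.card - 1 + 1 = S.card := Nat.succ_pred_eq_of_pos h
        nlinarith [this]
      omega
  omega

lemma card_filter_superset {P A : Finset (ℕ × ℕ)} (hA : A ⊆ P) :
    ((P.powerset).filter (fun T => A ⊆ T)).card = 2 ^ (P.card - A.card) := by
  classical
  rw [← Finset.card_sdiff_of_subset hA, ← Finset.card_powerset]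
  apply Finset.card_bij' (i := fun T _ => T \ A) (j := fun U _ => U ∪ A)
  · intro T hT
    simp only [Finset.mem_filter, Finset.mem_powerset] at hT
    rw [Finset.mem_powerset]
    exact Finset.sdiff_subset_sdiff hT.1 (Finset.Subset.refl A)
  · intro U hU
    rw [Finset.mem_powerset] at hU
    rw [Finset.mem_filter, Finset.mem_powerset]
    refine ⟨Finset.union_subset ((Finset.subset_sdiff.mp hU).1) hA, Finset.subset_union_right⟩
  · intro T hT
    simp only [Finset.mem_filter, Finset.mem_powerset] at hT
    exact Finset.sdiff_union_of_subset hT.2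
  · intro U hU
    rw [Finset.mem_powerset] at hU
    have hdisj : Disjoint U A := (Finset.subset_sdiff.mp hU).2
    rw [Finset.union_sdiff_cancel_right hdisj]

lemma card_filter_avoid {P A : Finset (ℕ × ℕ)} (hA : A ⊆ P) :
    ((P.powerset).filter (fun T => A ∩ T = ∅)).card = 2 ^ (P.card - A.card) := by
  classical
  have heq : (P.powerset).filter (fun T => A ∩ T = ∅) = (P \ A).powerset := by
    ext T
    simp only [Finset.mem_filter, Finset.mem_powerset, Finset.subset_sdiff]
    constructor
    · rintro ⟨h1, h2⟩
      refine ⟨h1, ?_⟩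
      rw [Finset.disjoint_iff_inter_eq_empty, Finset.inter_comm]
      exact h2
    · rintro ⟨h1, h2⟩
      refine ⟨h1, ?_⟩
      rw [Finset.inter_comm]
      rw [Finset.disjoint_iff_inter_eq_empty] at h2
      exact h2
  rw [heq, Finset.card_powerset, Finset.card_sdiff_of_subset hA]

lemma card_filter_mono_le {P A : Finset (ℕ × ℕ)} (hA : A ⊆ P) :
    ((P.powerset).filter (fun T => A ⊆ T ∨ A ∩ T = ∅)).card ≤ 2 * 2 ^ (P.card - A.card) := by
  classical
  have hsub : (P.powerset).filter (fun T => A ⊆ T ∨ A ∩ T = ∅) ⊆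
      (P.powerset).filter (fun T => A ⊆ T) ∪ (P.powerset).filter (fun T => A ∩ T = ∅) := by
    intro T hT
    rw [Finset.mem_filter] at hT
    rw [Finset.mem_union, Finset.mem_filter, Finset.mem_filter]
    tauto
  calc ((P.powerset).filter (fun T => A ⊆ T ∨ A ∩ T = ∅)).card
      ≤ ((P.powerset).filter (fun T => A ⊆ T) ∪ (P.powerset).filter (fun T => A ∩ T = ∅)).card :=
        Finset.card_le_card hsub
    _ ≤ ((P.powerset).filter (fun T => A ⊆ T)).card
        + ((P.powerset).filter (fun T => A ∩ T = ∅)).card := Finset.card_union_le _ _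
    _ = 2 * 2 ^ (P.card - A.card) := by
        rw [card_filter_superset hA, card_filter_avoid hA]; ring

lemma choose_le_pow' (n k : ℕ) : n.choose k ≤ n ^ k := by
  calc n.choose k ≤ n.descFactorial k := by
        rw [Nat.choose_eq_descFactorial_div_factorial]
        exact Nat.div_le_self _ _
    _ ≤ n ^ k := Nat.descFactorial_le_pow n k

end WRTC
namespace WRTC

lemma exists_good_coloring (V : Finset ℕ) (M : ℕ) (hM : 2 ≤ M)
    (h : 2 * V.card ^ M < 2 ^ (M * (M - 1) / 2)) :
    ∃ g : ℕ → ℕ → Fin 3, (∀ a b, g a b ≠ 2) ∧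
      ∀ S, S ⊆ V → S.card = M →
        ¬∃ clr : Fin 3, ∀ x ∈ S, ∀ y ∈ S, x < y → g x y = clr := by
  classical
  set P := pairsOf V with hP
  set Bad := (P.powerset).filter
      (fun T => ∃ S ∈ V.powersetCard M, (pairsOf S ⊆ T ∨ pairsOf S ∩ T = ∅)) with hBad
  have hcard : Bad.card < (P.powerset).card := by
    rw [Finset.card_powerset]
    rcases lt_or_ge V.card M with hVM | hVM
    · have hemp : V.powersetCard M = ∅ := Finset.powersetCard_eq_empty.mpr hVM
      have hbade : Bad = ∅ := by
        rw [hBad, Finset.filter_eq_empty_iff]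
        intro T _
        rw [hemp]
        simp
      rw [hbade]
      simp only [Finset.card_empty]
      positivity
    · obtain ⟨S₀, hS₀V, hS₀card⟩ := Finset.exists_subset_card_eq hVM
      have hCE : M * (M - 1) / 2 ≤ P.card := by
        have h1 : (pairsOf S₀).card = M * (M - 1) / 2 := by
          rw [pairsOf_card, hS₀card]
        rw [← h1]
        exact Finset.card_le_card (pairsOf_mono hS₀V)
      have hb : Bad ⊆ (V.powersetCard M).biUnion
          (fun S => (P.powerset).filter (fun T => pairsOf S ⊆ T ∨ pairsOf S ∩ T = ∅)) := by
        intro T hT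
        rw [hBad, Finset.mem_filter] at hT
        obtain ⟨hTP, S, hS, hmono⟩ := hT
        exact Finset.mem_biUnion.mpr ⟨S, hS, Finset.mem_filter.mpr ⟨hTP, hmono⟩⟩
      have hle : Bad.card ≤ (V.powersetCard M).card * (2 * 2 ^ (P.card - M * (M - 1) / 2)) := by
        refine (Finset.card_le_card hb).trans (Finset.card_biUnion_le.trans ?_)
        have := Finset.sum_le_card_nsmul (V.powersetCard M)
          (fun S => ((P.powerset).filter (fun T => pairsOf S ⊆ T ∨ pairsOf S ∩ T = ∅)).card)
          (2 * 2 ^ (P.card - M * (M - 1) / 2)) ?_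
        · simpa [smul_eq_mul] using this
        · intro S hS
          rw [Finset.mem_powersetCard] at hS
          have hAP : pairsOf S ⊆ P := pairsOf_mono hS.1
          have hAcard : (pairsOf S).card = M * (M - 1) / 2 := by
            rw [pairsOf_card, hS.2]
          calc ((P.powerset).filter (fun T => pairsOf S ⊆ T ∨ pairsOf S ∩ T = ∅)).card
              ≤ 2 * 2 ^ (P.card - (pairsOf S).card) := card_filter_mono_le hAP
            _ = 2 * 2 ^ (P.card - M * (M - 1) / 2) := by rw [hAcard]
      have hfin : (V.powersetCard M).card * (2 * 2 ^ (P.card - M * (M - 1) / 2)) < 2 ^ P.card := by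
        have h1 : (V.powersetCard M).card = V.card.choose M := Finset.card_powersetCard M V
        have h2 : V.card.choose M ≤ V.card ^ M := choose_le_pow' _ _
        have h3 : (V.powersetCard M).card * (2 * 2 ^ (P.card - M * (M - 1) / 2))
            ≤ (2 * V.card ^ M) * 2 ^ (P.card - M * (M - 1) / 2) := by
          rw [h1]
          nlinarith [Nat.pow_pos (n := P.card - M * (M - 1) / 2) (show 0 < 2 by norm_num),
            Nat.mul_le_mul_right (2 * 2 ^ (P.card - M * (M - 1) / 2)) h2]
        refine h3.trans_lt ?_
        calc (2 * V.card ^ M) * 2 ^ (P.card - M * (M - 1) / 2)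
            < 2 ^ (M * (M - 1) / 2) * 2 ^ (P.card - M * (M - 1) / 2) := by
              apply Nat.mul_lt_mul_of_lt_of_le h (le_refl _)
              positivity
          _ = 2 ^ P.card := by
              rw [← pow_add]
              congr 1
              omega
      exact hle.trans_lt hfin
  have hex : ∃ T ∈ P.powerset, T ∉ Bad := by
    by_contra hno
    push_neg at hno
    exact absurd (Finset.card_le_card (fun T hT => hno T hT)) (not_le.mpr hcard)
  obtain ⟨T, hTP, hTBad⟩ := hex
  refine ⟨fun a b => if (a, b) ∈ T then 1 else 0, ?_, ?_⟩
  · intro a b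
    by_cases hab : (a, b) ∈ T <;> simp [hab]
  · rintro S hSV hScard ⟨clr, hclr⟩
    apply hTBad
    rw [hBad, Finset.mem_filter]
    refine ⟨hTP, S, Finset.mem_powersetCard.mpr ⟨hSV, hScard⟩, ?_⟩
    have hclr2 : clr ≠ 2 := by
      have h1 : 1 < S.card := by omega
      obtain ⟨a, ha, b, hb, hab⟩ := Finset.one_lt_card.mp h1
      intro hc2
      subst hc2
      rcases hab.lt_or_gt with hlt | hlt
      · have := hclr a ha b hb hlt
        by_cases hm : (a, b) ∈ T <;> simp [hm] at this
      · have := hclr b hb a ha hlt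
        by_cases hm : (b, a) ∈ T <;> simp [hm] at this
    fin_cases clr
    · -- clr = 0 : no pair of S is in T
      right
      rw [Finset.eq_empty_iff_forall_notMem]
      intro p hp
      rw [Finset.mem_inter, mem_pairsOf] at hp
      obtain ⟨⟨h1, h2, h3⟩, hpT⟩ := hp
      have := hclr p.1 h1 p.2 h2 h3
      have hT' : (p.1, p.2) ∈ T := by simpa using hpT
      simp only [hT', if_true] at this
      exact absurd this (by decide)
    · -- clr = 1 : all pairs of S are in T
      left
      intro p hp
      rw [mem_pairsOf] at hp
      have := hclr p.1 hp.1 p.2 hp.2.1 hp.2.2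
      by_cases hm : (p.1, p.2) ∈ T
      · simpa using hm
      · simp only [hm, if_false] at this
        exact absurd this (by decide)
    · exact absurd rfl hclr2

end WRTC
namespace WRTC

def bexp : ℕ → ℕ
  | 0 => 1
  | (i + 1) => 2 ^ i + 1

lemma bexp_pos (i : ℕ) : 1 ≤ bexp i := by
  cases i with
  | zero => simp [bexp]
  | succ k => simp [bexp]

lemma self_le_bexp (i : ℕ) : i ≤ bexp i := by
  cases i with
  | zero => simp [bexp]
  | succ k =>
    have := Nat.lt_two_pow_self (n := k)
    simp only [bexp]
    omega

lemma two_pow_le_two_mul_bexp (i : ℕ) : 2 ^ i ≤ 2 * bexp i := by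
  cases i with
  | zero => simp [bexp]
  | succ k =>
    simp only [bexp, pow_succ]
    omega

def blockM (i : ℕ) : ℕ := 4 * bexp i + 1

def blockSet (i : ℕ) : Finset ℕ := Finset.Icc (2 ^ bexp i) (2 ^ bexp (i + 1) - 1)

lemma bexp_lt_bexp (i : ℕ) : bexp i < bexp (i + 1) := by
  cases i with
  | zero => simp [bexp]
  | succ k =>
    simp only [bexp]
    have : 2 ^ k < 2 ^ (k + 1) := Nat.pow_lt_pow_right (by norm_num) (Nat.lt_succ_self k)
    omega

lemma blockSet_card (i : ℕ) : (blockSet i).card = 2 ^ bexp (i + 1) - 2 ^ bexp i := by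
  rw [blockSet, Nat.card_Icc]
  have h1 : 2 ^ bexp i < 2 ^ bexp (i + 1) := Nat.pow_lt_pow_right (by norm_num) (bexp_lt_bexp i)
  have h2 : 1 ≤ 2 ^ bexp (i + 1) := Nat.one_le_two_pow
  omega

lemma ramsey_hyp (i : ℕ) :
    2 * (blockSet i).card ^ blockM i < 2 ^ (blockM i * (blockM i - 1) / 2) := by
  cases i with
  | zero =>
    have hc : (blockSet 0).card = 2 := by
      rw [blockSet_card]
      norm_num [bexp]
    rw [hc]
    norm_num [blockM, bexp]
  | succ k =>
    set b := bexp (k + 1) with hbdef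
    have hb2 : 2 ≤ b := by
      simp only [hbdef, bexp]
      have := Nat.one_le_two_pow (n := k)
      omega
    have hb' : bexp (k + 2) = 2 * b - 1 := by
      simp only [hbdef, bexp, pow_succ]
      omega
    have hM : blockM (k + 1) = 4 * b + 1 := rfl
    set M := blockM (k + 1) with hMdef
    have hM5 : M = 4 * b + 1 := hM
    have hcard : (blockSet (k + 1)).card ≤ 2 ^ (2 * b - 1) := by
      rw [blockSet_card, hb']
      exact Nat.sub_le _ _
    have hexp : M * (M - 1) / 2 = 2 * b * M := by
      have h1 : M - 1 = 4 * b := by omega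
      rw [h1]
      have h2 : M * (4 * b) = (2 * b * M) * 2 := by ring
      rw [h2]
      exact Nat.mul_div_cancel _ (by norm_num)
    have hlt : 1 + (2 * b - 1) * M < 2 * b * M := by
      have h1 : (2 * b - 1) * M + M = 2 * b * M := by
        have h2 : 2 * b - 1 + 1 = 2 * b := by omega
        calc (2 * b - 1) * M + M = (2 * b - 1 + 1) * M := by ring
          _ = 2 * b * M := by rw [h2]
      omega
    calc 2 * (blockSet (k + 1)).card ^ M ≤ 2 * (2 ^ (2 * b - 1)) ^ M := by
          have := Nat.pow_le_pow_left hcard M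
          omega
      _ = 2 ^ (1 + (2 * b - 1) * M) := by
          rw [pow_add, ← pow_mul, pow_one]
      _ < 2 ^ (2 * b * M) := Nat.pow_lt_pow_right (by norm_num) hlt
      _ = 2 ^ (M * (M - 1) / 2) := by rw [hexp]

def blockIdx (s : ℕ) : ℕ := Nat.findGreatest (fun i => 2 ^ bexp i ≤ s) s

lemma blockIdx_spec1 {s : ℕ} (hs : 2 ≤ s) : 2 ^ bexp (blockIdx s) ≤ s := by
  have h := Nat.findGreatest_spec (P := fun i => 2 ^ bexp i ≤ s) (m := 0) (Nat.zero_le s)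
    (by simpa [bexp] using hs)
  exact h

lemma blockIdx_le (s : ℕ) : blockIdx s ≤ s := Nat.findGreatest_le s

lemma blockIdx_lt_self {s : ℕ} (hs : 2 ≤ s) : blockIdx s < s := by
  rcases lt_or_ge (blockIdx s) s with h | h
  · exact h
  · exfalso
    have h1 := blockIdx_spec1 hs
    have h2 : blockIdx s = s := le_antisymm (blockIdx_le s) h
    rw [h2] at h1
    have h3 : s < 2 ^ bexp s :=
      lt_of_lt_of_le (Nat.lt_two_pow_self (n := s)) (Nat.pow_le_pow_right (by norm_num) (self_le_bexp s))
    omega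

lemma blockIdx_spec2 {s : ℕ} (hs : 2 ≤ s) : s < 2 ^ bexp (blockIdx s + 1) := by
  by_contra hcon
  push_neg at hcon
  exact Nat.findGreatest_is_greatest (Nat.lt_succ_self _) (blockIdx_lt_self hs) hcon

lemma mem_blockSet {s : ℕ} (hs : 2 ≤ s) : s ∈ blockSet (blockIdx s) := by
  rw [blockSet, Finset.mem_Icc]
  have h1 := blockIdx_spec1 hs
  have h2 := blockIdx_spec2 hs
  omega

lemma logb_ge {s b : ℕ} (hb : 1 ≤ b) (hs : 2 ^ b ≤ s) : (b : ℝ) ≤ Real.logb 2 s := by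
  have h1 : ((2 : ℝ)) ^ b ≤ (s : ℝ) := by exact_mod_cast hs
  have h2 : Real.logb 2 ((2 : ℝ) ^ b) = b := by
    rw [Real.logb_pow, Real.logb_self_eq_one (by norm_num)]
    ring
  calc (b : ℝ) = Real.logb 2 ((2 : ℝ) ^ b) := h2.symm
    _ ≤ Real.logb 2 s := Real.logb_le_logb_of_le (by norm_num) (by positivity) h1

lemma weight_le {s b : ℕ} (hb : 1 ≤ b) (hs : 2 ^ b ≤ s) :
    1 / Real.logb 2 s ≤ 1 / (b : ℝ) := by
  have hb' : (0 : ℝ) < b := by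
    have : (1 : ℝ) ≤ b := by exact_mod_cast hb
    linarith
  exact one_div_le_one_div_of_le hb' (logb_ge hb hs)

lemma weight_pos {s : ℕ} (hs : 2 ≤ s) : 0 < Real.logb 2 s := by
  have := logb_ge (b := 1) le_rfl (by simpa using hs)
  simp only [Nat.cast_one] at this
  linarith

lemma geom_le_two (m : ℕ) : ∑ i ∈ Finset.range m, ((1 : ℝ) / 2) ^ i ≤ 2 := by
  have h := geom_sum_eq (by norm_num : (1 / 2 : ℝ) ≠ 1) m
  rw [h]
  have h1 : (0 : ℝ) ≤ (1 / 2 : ℝ) ^ m := by positivity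
  have h2 : ((1 / 2 : ℝ) ^ m - 1) / ((1 / 2 : ℝ) - 1) = 2 - 2 * (1 / 2 : ℝ) ^ m := by
    field_simp
    ring
  rw [h2]
  linarith

end WRTC
/-- For all sufficiently large `n` there is a 3-coloring of the edges of
the complete graph on `{2, ..., n}` in which every monochromatic clique `S` satisfies
`∑_{s ∈ S} 1 / log₂ s ≤ 4`. -/
theorem weighted_ramsey_three_colors_bounded :
    ∃ N : ℕ, ∀ n : ℕ, N ≤ n →
      ∃ c : ℕ → ℕ → Fin 3,
        ∀ S : Finset ℕ, S ⊆ Finset.Icc 2 n →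
          (∃ clr : Fin 3, ∀ i ∈ S, ∀ j ∈ S, i < j → c i j = clr) →
          ∑ s ∈ S, 1 / Real.logb 2 (s : ℝ) ≤ 4 := by
  classical
  have Hg : ∀ i : ℕ, ∃ g : ℕ → ℕ → Fin 3, (∀ a b, g a b ≠ 2) ∧
      ∀ S, S ⊆ WRTC.blockSet i → S.card = WRTC.blockM i →
        ¬∃ clr : Fin 3, ∀ x ∈ S, ∀ y ∈ S, x < y → g x y = clr := by
    intro i
    exact WRTC.exists_good_coloring (WRTC.blockSet i) (WRTC.blockM i)
      (by have := WRTC.bexp_pos i; unfold WRTC.blockM; omega) (WRTC.ramsey_hyp i)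
  choose gf hgf1 hgf2 using Hg
  refine ⟨2, fun n _ => ?_⟩
  refine ⟨fun i j => if WRTC.blockIdx i = WRTC.blockIdx j then gf (WRTC.blockIdx i) i j else 2,
    fun S hS hmono => ?_⟩
  obtain ⟨clr, hclr⟩ := hmono
  have hS2 : ∀ s ∈ S, 2 ≤ s := fun s hs => (Finset.mem_Icc.mp (hS hs)).1
  have hSn : ∀ s ∈ S, s ≤ n := fun s hs => (Finset.mem_Icc.mp (hS hs)).2
  by_cases hinj : ∀ x ∈ S, ∀ y ∈ S, WRTC.blockIdx x = WRTC.blockIdx y → x = y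
  · -- Case B : all elements in pairwise distinct blocks
    have hpt : ∀ s ∈ S, 1 / Real.logb 2 (s : ℝ) ≤ 2 * ((1 : ℝ) / 2) ^ WRTC.blockIdx s := by
      intro s hs
      have h1 : 1 / Real.logb 2 (s : ℝ) ≤ 1 / ((WRTC.bexp (WRTC.blockIdx s) : ℕ) : ℝ) :=
        WRTC.weight_le (WRTC.bexp_pos _) (WRTC.blockIdx_spec1 (hS2 s hs))
      have h3 : ((2 : ℝ)) ^ WRTC.blockIdx s ≤ 2 * ((WRTC.bexp (WRTC.blockIdx s) : ℕ) : ℝ) := by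
        exact_mod_cast WRTC.two_pow_le_two_mul_bexp (WRTC.blockIdx s)
      have h4 : (2 : ℝ) * ((1 : ℝ) / 2) ^ WRTC.blockIdx s = 2 / 2 ^ WRTC.blockIdx s := by
        rw [one_div, inv_pow]
        ring
    -- now 1/bexp ≤ 2/2^I
      have hbp : (0:ℝ) < ((WRTC.bexp (WRTC.blockIdx s) : ℕ) : ℝ) := by
        have := WRTC.bexp_pos (WRTC.blockIdx s)
        exact_mod_cast Nat.lt_of_lt_of_le Nat.zero_lt_one this
      have h5 : 1 / ((WRTC.bexp (WRTC.blockIdx s) : ℕ) : ℝ) ≤ 2 / 2 ^ WRTC.blockIdx s := by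
        rw [div_le_div_iff₀ hbp (by positivity)]
        nlinarith [h3]
      rw [h4]
      linarith
    calc ∑ s ∈ S, 1 / Real.logb 2 (s : ℝ)
        ≤ ∑ s ∈ S, 2 * ((1 : ℝ) / 2) ^ WRTC.blockIdx s := Finset.sum_le_sum hpt
      _ = 2 * ∑ s ∈ S, ((1 : ℝ) / 2) ^ WRTC.blockIdx s := by rw [Finset.mul_sum]
      _ = 2 * ∑ i ∈ S.image WRTC.blockIdx, ((1 : ℝ) / 2) ^ i := by rw [Finset.sum_image hinj]
      _ ≤ 2 * ∑ i ∈ Finset.range (n + 1), ((1 : ℝ) / 2) ^ i := by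
          have hsub : S.image WRTC.blockIdx ⊆ Finset.range (n + 1) := by
            intro i hi
            obtain ⟨s, hs, rfl⟩ := Finset.mem_image.mp hi
            rw [Finset.mem_range]
            have := WRTC.blockIdx_le s
            have := hSn s hs
            omega
          have := Finset.sum_le_sum_of_subset_of_nonneg hsub
            (fun i _ _ => by positivity : ∀ i ∈ Finset.range (n + 1),
              i ∉ S.image WRTC.blockIdx → (0:ℝ) ≤ ((1 : ℝ) / 2) ^ i)
          linarith
      _ ≤ 2 * 2 := by
          have := WRTC.geom_le_two (n + 1)
          linarith
      _ = 4 := by norm_num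
  · -- Case A : two elements share a block; then all of S is in one block
    push_neg at hinj
    obtain ⟨x, hx, y, hy, hxyblk, hxy⟩ := hinj
    set i₀ := WRTC.blockIdx x with hi₀
    have hclr2 : clr ≠ 2 := by
      rcases hxy.lt_or_gt with h | h
      · have hc := hclr x hx y hy h
        dsimp only at hc
        rw [if_pos hxyblk] at hc
        rw [← hc]
        exact hgf1 _ _ _
      · have hc := hclr y hy x hx h
        dsimp only at hc
        rw [if_pos hxyblk.symm] at hc
        rw [← hc]
        exact hgf1 _ _ _
    have hall : ∀ z ∈ S, WRTC.blockIdx z = i₀ := by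
      intro z hz
      by_contra hne
      have hzx : z ≠ x := by
        intro hzz
        exact hne (by rw [hzz])
      rcases hzx.lt_or_gt with h | h
      · have hc := hclr z hz x hx h
        dsimp only at hc
        rw [if_neg hne] at hc
        exact hclr2 hc.symm
      · have hc := hclr x hx z hz h
        dsimp only at hc
        rw [if_neg (fun hh => hne hh.symm)] at hc
        exact hclr2 hc.symm
    have hsub : S ⊆ WRTC.blockSet i₀ := by
      intro z hz
      have h1 := WRTC.mem_blockSet (hS2 z hz)
      rwa [hall z hz] at h1
    have hmonog : ∀ a ∈ S, ∀ b ∈ S, a < b → gf i₀ a b = clr := by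
      intro a ha b hb hab
      have hc := hclr a ha b hb hab
      dsimp only at hc
      rw [if_pos ((hall a ha).trans (hall b hb).symm)] at hc
      rwa [hall a ha] at hc
    have hcard : S.card ≤ 4 * WRTC.bexp i₀ := by
      by_contra hbig
      push_neg at hbig
      obtain ⟨S', hS'sub, hS'card⟩ := Finset.exists_subset_card_eq
        (show WRTC.blockM i₀ ≤ S.card by unfold WRTC.blockM; omega)
      exact hgf2 i₀ S' (hS'sub.trans hsub) hS'card
        ⟨clr, fun a ha b hb hab => hmonog a (hS'sub ha) b (hS'sub hb) hab⟩
    have hpt : ∀ s ∈ S, 1 / Real.logb 2 (s : ℝ) ≤ 1 / ((WRTC.bexp i₀ : ℕ) : ℝ) := by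
      intro s hs
      have h1 := WRTC.blockIdx_spec1 (hS2 s hs)
      rw [hall s hs] at h1
      exact WRTC.weight_le (WRTC.bexp_pos _) h1
    have hbp : (0:ℝ) < ((WRTC.bexp i₀ : ℕ) : ℝ) := by
      have := WRTC.bexp_pos i₀
      exact_mod_cast Nat.lt_of_lt_of_le Nat.zero_lt_one this
    calc ∑ s ∈ S, 1 / Real.logb 2 (s : ℝ)
        ≤ ∑ _s ∈ S, 1 / ((WRTC.bexp i₀ : ℕ) : ℝ) := Finset.sum_le_sum hpt
      _ = (S.card : ℝ) * (1 / ((WRTC.bexp i₀ : ℕ) : ℝ)) := by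
          rw [Finset.sum_const, nsmul_eq_mul]
      _ ≤ ((4 * WRTC.bexp i₀ : ℕ) : ℝ) * (1 / ((WRTC.bexp i₀ : ℕ) : ℝ)) := by
          have hc : (S.card : ℝ) ≤ ((4 * WRTC.bexp i₀ : ℕ) : ℝ) := by exact_mod_cast hcard
          have hnn : (0:ℝ) ≤ 1 / ((WRTC.bexp i₀ : ℕ) : ℝ) := by positivity
          nlinarith
      _ = 4 := by
          push_cast
          field_simp
end

section
/- Suppose p > 0 is a real number and s, t, m, N₁, N₂ are positive integers satisfying C(N₁, s) · (m/N₂)^t ≤ p^t · N₁ / 2, where C(N₁, s) is the binomial coefficient. If G = (V₁, V₂, E) is a bipartite graph with |V₁| = N₁, |V₂| = N₂ and at least p·N₁·N₂ edges, then G has a vertex subset U ⊆ V₁ such that |U| ≥ p^t · N₁ / 2 and every s vertices in U have at least m common neighbors in V₂. -/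
set_option maxRecDepth 10000


/-- Dependent random choice, Lemma 2.1.
If `p > 0` and `s, t, m, N₁, N₂` are positive integers with
`C(N₁, s) · (m / N₂)^t ≤ p^t · N₁ / 2`, then every bipartite graph `G = (V₁, V₂, E)` with
`|V₁| = N₁`, `|V₂| = N₂` and at least `p · N₁ · N₂` edges contains a subset `U ⊆ V₁` with
`|U| ≥ p^t · N₁ / 2` such that every `s` vertices of `U` have at least `m` common
neighbors in `V₂`. -/
theorem dependent_random_choice {α β : Type*} [DecidableEq α] [DecidableEq β]
    (p : ℝ) (hp : 0 < p) (s t m N₁ N₂ : ℕ)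
    (hs : 0 < s) (ht : 0 < t) (hm : 0 < m) (hN₁ : 0 < N₁) (hN₂ : 0 < N₂)
    (hcond : (N₁.choose s : ℝ) * ((m : ℝ) / (N₂ : ℝ)) ^ t ≤ p ^ t * N₁ / 2)
    (V₁ : Finset α) (V₂ : Finset β) (E : α → β → Prop) [∀ a b, Decidable (E a b)]
    (hV₁ : V₁.card = N₁) (hV₂ : V₂.card = N₂)
    (hedges : p * N₁ * N₂ ≤ ∑ v ∈ V₁, ((V₂.filter fun w => E v w).card : ℝ)) :
    ∃ U : Finset α, U ⊆ V₁ ∧ p ^ t * N₁ / 2 ≤ (U.card : ℝ) ∧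
      ∀ T : Finset α, T ⊆ U → T.card = s →
        m ≤ (V₂.filter fun w => ∀ v ∈ T, E v w).card := by
  classical
  -- the sample space: t-tuples of vertices of V₂
  set W : Finset (Fin t → β) := Fintype.piFinset fun _ => V₂ with hW
  have hWcard : W.card = N₂ ^ t := by
    simp [hW, Fintype.card_piFinset, hV₂]
  -- common neighborhood of a tuple
  set A : (Fin t → β) → Finset α := fun w => V₁.filter fun v => ∀ i, E v (w i) with hA
  -- common neighborhood in V₂ of a set of vertices of V₁
  set cn : Finset α → Finset β := fun S => V₂.filter fun y => ∀ v ∈ S, E v y with hcn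
  -- the bad s-subsets
  set Bs : Finset (Finset α) := (V₁.powersetCard s).filter fun S => (cn S).card < m
    with hBs
  set bad : (Fin t → β) → ℕ := fun w => (Bs.filter fun S => S ⊆ A w).card with hbad
  set deg : α → ℕ := fun v => (V₂.filter fun y => E v y).card with hdeg
  -- Step 1 : counting common neighborhoods
  have step1 : ∑ w ∈ W, (A w).card = ∑ v ∈ V₁, deg v ^ t := by
    have : ∀ w, (A w).card = ∑ v ∈ V₁, if (∀ i, E v (w i)) then 1 else 0 := by
      intro w
      simp only [hA, Finset.card_filter]
    simp only [this]
    rw [Finset.sum_comm]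
    refine Finset.sum_congr rfl fun v _ => ?_
    have : Finset.filter (fun w => ∀ i, E v (w i)) W
        = Fintype.piFinset fun _ : Fin t => V₂.filter fun y => E v y := by
      ext w
      simp only [Finset.mem_filter, hW, Fintype.mem_piFinset, Finset.mem_filter]
      constructor
      · rintro ⟨h1, h2⟩ i
        exact ⟨h1 i, h2 i⟩
      · intro h
        exact ⟨fun i => (h i).1, fun i => (h i).2⟩
    calc ∑ w ∈ W, (if (∀ i, E v (w i)) then 1 else 0)
        = (Finset.filter (fun w => ∀ i, E v (w i)) W).card := by
          rw [Finset.card_filter]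
      _ = deg v ^ t := by
          rw [this, Fintype.card_piFinset]
          simp [hdeg]
  -- Step 2 : counting bad sets
  have step2 : ∑ w ∈ W, bad w = ∑ S ∈ Bs, (cn S).card ^ t := by
    have : ∀ w, bad w = ∑ S ∈ Bs, if S ⊆ A w then 1 else 0 := by
      intro w; simp only [hbad, Finset.card_filter]
    simp only [this]
    rw [Finset.sum_comm]
    refine Finset.sum_congr rfl fun S hS => ?_
    have hSV : S ⊆ V₁ := by
      rw [hBs] at hS
      exact (Finset.mem_powersetCard.1 (Finset.mem_filter.1 hS).1).1
    have hfil : Finset.filter (fun w => S ⊆ A w) W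
        = Fintype.piFinset fun _ : Fin t => cn S := by
      ext w
      simp only [Finset.mem_filter, hW, Fintype.mem_piFinset, hA, hcn,
        Finset.subset_iff, Finset.mem_filter]
      constructor
      · rintro ⟨h1, h2⟩ i
        refine ⟨h1 i, fun v hv => (h2 hv).2 i⟩
      · intro h
        exact ⟨fun i => (h i).1, fun v hv => ⟨hSV hv, fun i => (h i).2 v hv⟩⟩
    calc ∑ w ∈ W, (if S ⊆ A w then 1 else 0)
        = (Finset.filter (fun w => S ⊆ A w) W).card := by rw [Finset.card_filter]
      _ = (cn S).card ^ t := by rw [hfil, Fintype.card_piFinset]; simp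
  -- Step 3 : lower bound for the average, in ℝ
  have hN₁R : (0:ℝ) < N₁ := by exact_mod_cast hN₁
  have hN₂R : (0:ℝ) < N₂ := by exact_mod_cast hN₂
  have hsum1 : p ^ t * N₁ * N₂ ^ t ≤ ∑ v ∈ V₁, (deg v : ℝ) ^ t := by
    obtain ⟨n, rfl⟩ : ∃ n, t = n + 1 := ⟨t - 1, (Nat.succ_pred_eq_of_pos ht).symm⟩
    have hjensen := pow_sum_div_card_le_sum_pow
      (f := fun v => (deg v : ℝ)) (s := V₁) (fun i _ => by positivity) n
    have hlow : (p * N₁ * N₂) ^ (n+1) ≤ (∑ v ∈ V₁, (deg v : ℝ)) ^ (n+1) := by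
      exact pow_le_pow_left₀ (by positivity) hedges _
    have : (p * N₁ * N₂) ^ (n+1) / (N₁:ℝ) ^ n ≤ ∑ v ∈ V₁, (deg v : ℝ) ^ (n+1) := by
      rw [hV₁] at hjensen
      calc (p * N₁ * N₂) ^ (n+1) / (N₁:ℝ) ^ n
          ≤ (∑ v ∈ V₁, (deg v : ℝ)) ^ (n+1) / (N₁:ℝ) ^ n := by
            apply div_le_div_of_nonneg_right hlow (by positivity)
        _ ≤ _ := hjensen
    calc p ^ (n+1) * N₁ * N₂ ^ (n+1) = (p * N₁ * N₂) ^ (n+1) / (N₁:ℝ) ^ n := by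
          field_simp
          ring
      _ ≤ _ := this
  have hsum2 : (∑ S ∈ Bs, ((cn S).card : ℝ) ^ t) ≤ p ^ t * N₁ / 2 * N₂ ^ t := by
    have h1 : ∀ S ∈ Bs, ((cn S).card : ℝ) ^ t ≤ (m : ℝ) ^ t := by
      intro S hS
      have : (cn S).card < m := (Finset.mem_filter.1 hS).2
      exact pow_le_pow_left₀ (by positivity) (by exact_mod_cast this.le) t
    have h2 : ∑ S ∈ Bs, ((cn S).card : ℝ) ^ t ≤ Bs.card * (m:ℝ) ^ t := by
      calc ∑ S ∈ Bs, ((cn S).card : ℝ) ^ t ≤ ∑ _S ∈ Bs, (m:ℝ) ^ t :=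
            Finset.sum_le_sum h1
        _ = Bs.card * (m:ℝ) ^ t := by rw [Finset.sum_const, nsmul_eq_mul]
    have h3 : (Bs.card : ℝ) ≤ N₁.choose s := by
      have : Bs.card ≤ (V₁.powersetCard s).card := Finset.card_filter_le _ _
      rw [Finset.card_powersetCard, hV₁] at this
      exact_mod_cast this
    have h4 : (N₁.choose s : ℝ) * (m:ℝ) ^ t ≤ p ^ t * N₁ / 2 * N₂ ^ t := by
      have := mul_le_mul_of_nonneg_right hcond (by positivity : (0:ℝ) ≤ (N₂:ℝ) ^ t)
      calc (N₁.choose s : ℝ) * (m:ℝ) ^ t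
          = (N₁.choose s : ℝ) * ((m : ℝ) / (N₂ : ℝ)) ^ t * (N₂:ℝ) ^ t := by
            rw [div_pow]; field_simp
        _ ≤ p ^ t * N₁ / 2 * N₂ ^ t := this
    calc ∑ S ∈ Bs, ((cn S).card : ℝ) ^ t ≤ Bs.card * (m:ℝ) ^ t := h2
      _ ≤ (N₁.choose s : ℝ) * (m:ℝ) ^ t := by
          apply mul_le_mul_of_nonneg_right h3 (by positivity)
      _ ≤ _ := h4
  -- average argument: find a good tuple
  have hWne : W.Nonempty := by
    rw [← Finset.card_pos, hWcard]; positivity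
  have hmain : ∑ w ∈ W, (p ^ t * N₁ / 2) ≤
      ∑ w ∈ W, (((A w).card : ℝ) - (bad w : ℝ)) := by
    rw [Finset.sum_const, nsmul_eq_mul, hWcard, Finset.sum_sub_distrib]
    have e1 : ∑ w ∈ W, ((A w).card : ℝ) = ∑ v ∈ V₁, (deg v : ℝ) ^ t := by
      exact_mod_cast congrArg (Nat.cast : ℕ → ℝ) step1
    have e2 : ∑ w ∈ W, ((bad w : ℝ)) = ∑ S ∈ Bs, ((cn S).card : ℝ) ^ t := by
      exact_mod_cast congrArg (Nat.cast : ℕ → ℝ) step2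
    rw [e1, e2]
    push_cast
    nlinarith [hsum1, hsum2]
  obtain ⟨w₀, _, hw₀⟩ := Finset.exists_le_of_sum_le hWne hmain
  -- Step 4 : construct U by deleting one vertex from each bad subset of A w₀
  set B' : Finset (Finset α) := Bs.filter fun S => S ⊆ A w₀ with hB'
  have hB'ne : ∀ S ∈ B', S.Nonempty := by
    intro S hS
    have hmem : S ∈ V₁.powersetCard s :=
      (Finset.mem_filter.1 (Finset.mem_filter.1 hS).1).1
    have : S.card = s := (Finset.mem_powersetCard.1 hmem).2
    rw [← Finset.card_pos, this]; exact hs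
  set D : Finset α := B'.attach.image fun S => ((hB'ne S.1 S.2).choose) with hD
  refine ⟨A w₀ \ D, ?_, ?_, ?_⟩
  · exact (Finset.sdiff_subset).trans (Finset.filter_subset _ _)
  · have hDcard : D.card ≤ B'.card := by
      calc D.card ≤ B'.attach.card := Finset.card_image_le
        _ = B'.card := Finset.card_attach
    have hsd : (A w₀).card - D.card ≤ (A w₀ \ D).card := Finset.le_card_sdiff D (A w₀)
    have hbadw : bad w₀ = B'.card := rfl
    have hcast : ((A w₀).card : ℝ) - D.card ≤ (((A w₀).card - D.card : ℕ) : ℝ) := by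
      rcases le_total D.card (A w₀).card with h' | h'
      · rw [Nat.cast_sub h']
      · rw [Nat.sub_eq_zero_of_le h']
        have : ((A w₀).card : ℝ) ≤ (D.card : ℝ) := by exact_mod_cast h'
        push_cast
        linarith
    have : ((A w₀).card : ℝ) - D.card ≤ ((A w₀ \ D).card : ℝ) :=
      hcast.trans (by exact_mod_cast hsd)
    have hDB : (D.card : ℝ) ≤ (bad w₀ : ℝ) := by
      rw [hbadw]; exact_mod_cast hDcard
    linarith [hw₀, this, hDB]
  · intro T hT hTcard
    by_contra hlt
    push_neg at hlt
    have hTA : T ⊆ A w₀ := hT.trans Finset.sdiff_subset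
    have hTV : T ⊆ V₁ := hTA.trans (Finset.filter_subset _ _)
    have hTB : T ∈ Bs := by
      rw [hBs, Finset.mem_filter, Finset.mem_powersetCard]
      exact ⟨⟨hTV, hTcard⟩, hlt⟩
    have hTB' : T ∈ B' := Finset.mem_filter.2 ⟨hTB, hTA⟩
    have hmin : (hB'ne T hTB').choose ∈ D := by
      rw [hD]
      exact Finset.mem_image.2 ⟨⟨T, hTB'⟩, Finset.mem_attach _ _, rfl⟩
    have hminT : (hB'ne T hTB').choose ∈ T := (hB'ne T hTB').choose_spec
    have := hT hminT
    rw [Finset.mem_sdiff] at this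
    exact this.2 hmin
end

section
/- Suppose that the edges of the complete graph on n vertices have been 2-colored in red and blue and that each vertex v has been assigned positive real weights r_v and b_v satisfying: b_v ≥ ln(4/r_v) whenever r_v ≤ b_v, and r_v ≥ ln(4/b_v) whenever b_v ≤ r_v. Then there exists either a red clique K with ∑_{v ∈ K} r_v ≥ (1/2)·ln n or a blue clique L with ∑_{v ∈ L} b_v ≥ (1/2)·ln n. -/
open Finset

/-- Numeric core: if `0 < r ≤ b`, `log (4/r) ≤ b`, and `r + b < log m`, then
`e^{-r} + e^{-b} ≤ 1 - 1/m`. -/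
lemma weighted_ramsey_num (m : ℕ) (r b : ℝ) (hr : 0 < r) (hrb : r ≤ b)
    (h4 : Real.log (4 / r) ≤ b) (hm : r + b < Real.log m) :
    Real.exp (-r) + Real.exp (-b) ≤ 1 - 1 / m := by
  have hb : 0 < b := lt_of_lt_of_le hr hrb
  have hm2 : 2 ≤ m := by
    by_contra hc
    push_neg at hc
    interval_cases m
    · simp only [Nat.cast_zero, Real.log_zero] at hm; linarith
    · simp only [Nat.cast_one, Real.log_one] at hm; linarith
  have hmR : (2:ℝ) ≤ (m:ℝ) := by exact_mod_cast hm2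
  have hmpos : (0:ℝ) < (m:ℝ) := by linarith
  -- e^{-b} ≤ r/4
  have h1 : Real.exp (-b) ≤ r / 4 := by
    have hx : 4 / r ≤ Real.exp b := by
      calc 4 / r = Real.exp (Real.log (4 / r)) := (Real.exp_log (by positivity)).symm
        _ ≤ Real.exp b := Real.exp_le_exp.mpr h4
    have := one_div_le_one_div_of_le (by positivity : (0:ℝ) < 4 / r) hx
    rw [one_div_div] at this
    rw [Real.exp_neg, inv_eq_one_div]
    exact this
  -- 4/m < r
  have hrm : 4 / (m:ℝ) < r := by
    by_contra hc
    push_neg at hc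
    have hmr : (m:ℝ) ≤ 4 / r := by
      rw [le_div_iff₀ hr]
      have := (le_div_iff₀ hmpos).mp hc
      nlinarith [this]
    have : Real.log m ≤ Real.log (4 / r) := Real.log_le_log hmpos hmr
    linarith
  have h1m : 1 / (m:ℝ) < r / 4 := by
    have h4m : 4 / (m:ℝ) = 4 * (1 / m) := by ring
    rw [h4m] at hrm
    linarith
  rcases le_total r 1 with hle | hgt
  · -- small r case
    have h2 : Real.exp (-r) ≤ 1 / (1 + r) := by
      have hx := Real.add_one_le_exp r
      have := one_div_le_one_div_of_le (by linarith : (0:ℝ) < 1 + r) (by linarith)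
      rw [Real.exp_neg, inv_eq_one_div]
      exact this
    have h3 : 1 / (1 + r) ≤ 1 - r / 2 := by
      rw [div_le_iff₀ (by linarith : (0:ℝ) < 1 + r)]
      nlinarith
    linarith
  · -- large r case : r ≥ 1, b ≥ 1
    have hE := Real.exp_one_gt_d9
    have hx : Real.exp (-1) ≤ 0.37 := by
      have hinv : Real.exp (-1) * Real.exp 1 = 1 := by
        rw [← Real.exp_add]; norm_num
      nlinarith [Real.exp_pos (-1), hE]
    have hq : Real.exp (-2) = Real.exp (-1) * Real.exp (-1) := by
      rw [← Real.exp_add]; norm_num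
    have hm3 : Real.exp 2 < (m:ℝ) := by
      have h2' : (2:ℝ) < Real.log m := by linarith
      calc Real.exp 2 < Real.exp (Real.log m) := Real.exp_lt_exp.mpr h2'
        _ = m := Real.exp_log hmpos
    have h1m2 : 1 / (m:ℝ) < Real.exp (-2) := by
      have := one_div_lt_one_div_of_lt (Real.exp_pos 2) hm3
      rw [Real.exp_neg, inv_eq_one_div]
      exact this
    have h2 : Real.exp (-r) ≤ Real.exp (-1) := Real.exp_le_exp.mpr (by linarith)
    have h3 : Real.exp (-b) ≤ Real.exp (-1) := Real.exp_le_exp.mpr (by linarith)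
    nlinarith [Real.exp_pos (-1)]

/-- Main induction: in any set `S` of vertices there are a red clique `K ⊆ S` and a blue
clique `L ⊆ S` with `log |S| ≤ ∑_K r + ∑_L b`. -/
lemma weighted_ramsey_main (n : ℕ) (c : Fin n → Fin n → Bool) (r b : Fin n → ℝ)
    (hr : ∀ v, 0 < r v) (hb : ∀ v, 0 < b v)
    (hrb : ∀ v, r v ≤ b v → Real.log (4 / r v) ≤ b v)
    (hbr : ∀ v, b v ≤ r v → Real.log (4 / b v) ≤ r v) :
    ∀ (k : ℕ) (S : Finset (Fin n)), S.card ≤ k →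
      ∃ K L : Finset (Fin n), K ⊆ S ∧ L ⊆ S ∧
        (∀ i ∈ K, ∀ j ∈ K, i < j → c i j = true) ∧
        (∀ i ∈ L, ∀ j ∈ L, i < j → c i j = false) ∧
        Real.log S.card ≤ ∑ v ∈ K, r v + ∑ v ∈ L, b v := by
  intro k
  induction k with
  | zero =>
    intro S hS
    have hS0 : S = ∅ := Finset.card_eq_zero.mp (Nat.le_zero.mp hS)
    subst hS0
    exact ⟨∅, ∅, Finset.Subset.refl _, Finset.Subset.refl _, by simp, by simp, by simp⟩
  | succ k IH =>
    intro S hS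
    rcases S.eq_empty_or_nonempty with rfl | ⟨v, hv⟩
    · exact ⟨∅, ∅, Finset.Subset.refl _, Finset.Subset.refl _, by simp, by simp, by simp⟩
    rcases le_or_gt (Real.log S.card) (r v + b v) with hsmall | hbig
    · -- singleton works
      refine ⟨{v}, {v}, Finset.singleton_subset_iff.mpr hv,
        Finset.singleton_subset_iff.mpr hv, ?_, ?_, ?_⟩
      · intro i hi j hj hij
        simp only [Finset.mem_singleton] at hi hj
        subst hi; subst hj; exact absurd hij (lt_irrefl _)
      · intro i hi j hj hij
        simp only [Finset.mem_singleton] at hi hj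
        subst hi; subst hj; exact absurd hij (lt_irrefl _)
      · simpa using hsmall
    · -- main step
      have hEsum : Real.exp (-(r v)) + Real.exp (-(b v)) ≤ 1 - 1 / S.card := by
        rcases le_total (r v) (b v) with h' | h'
        · exact weighted_ramsey_num S.card (r v) (b v) (hr v) h' (hrb v h') hbig
        · have := weighted_ramsey_num S.card (b v) (r v) (hb v) h' (hbr v h')
            (by linarith)
          linarith
      set R := (S.erase v).filter (fun u => (if v < u then c v u else c u v) = true)
        with hRdef
      set B := (S.erase v).filter (fun u => (if v < u then c v u else c u v) = false)
        with hBdef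
      have hcard1 : 1 ≤ S.card := Finset.card_pos.mpr ⟨v, hv⟩
      have hRB : R.card + B.card = S.card - 1 := by
        have hBeq : B = (S.erase v).filter
            (fun u => ¬ ((if v < u then c v u else c u v) = true)) := by
          apply Finset.filter_congr
          intro u _
          simp [Bool.not_eq_true]
        rw [hBeq]
        rw [Finset.card_filter_add_card_filter_not]
        exact Finset.card_erase_of_mem hv
      have hScard : S.card = R.card + B.card + 1 := by omega
      have hcast : (R.card : ℝ) + (B.card : ℝ) = (S.card : ℝ) - 1 := by
        rw [hScard]; push_cast; ring
      have hmpos : (0:ℝ) < (S.card:ℝ) := by exact_mod_cast hcard1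
      have hM : (S.card:ℝ) * Real.exp (-(r v)) + (S.card:ℝ) * Real.exp (-(b v))
          ≤ (S.card:ℝ) - 1 := by
        have := mul_le_mul_of_nonneg_left hEsum (le_of_lt hmpos)
        have hone : (S.card:ℝ) * (1 - 1 / S.card) = (S.card:ℝ) - 1 := by
          rw [mul_sub, mul_one, mul_one_div_cancel (ne_of_gt hmpos)]
        nlinarith [this]
      have hpig : (S.card:ℝ) * Real.exp (-(r v)) ≤ R.card ∨
          (S.card:ℝ) * Real.exp (-(b v)) ≤ B.card := by
        by_contra hc
        push_neg at hc
        linarith [hc.1, hc.2]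
      have hRsub : R ⊆ S := (Finset.filter_subset _ _).trans (Finset.erase_subset _ _)
      have hBsub : B ⊆ S := (Finset.filter_subset _ _).trans (Finset.erase_subset _ _)
      have hvR : v ∉ R := fun h => (Finset.notMem_erase v S) (Finset.filter_subset _ _ h)
      have hvB : v ∉ B := fun h => (Finset.notMem_erase v S) (Finset.filter_subset _ _ h)
      rcases hpig with hpR | hpB
      · -- red neighborhood is big
        have hRk : R.card ≤ k := by
          have h1 : R.card ≤ (S.erase v).card := Finset.card_le_card (Finset.filter_subset _ _)
          rw [Finset.card_erase_of_mem hv] at h1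
          omega
        obtain ⟨K', L', hK'R, hL'R, hK'red, hL'blue, hsum⟩ := IH R hRk
        have hvK' : v ∉ K' := fun h => hvR (hK'R h)
        refine ⟨insert v K', L', ?_, hL'R.trans hRsub, ?_, hL'blue, ?_⟩
        · exact Finset.insert_subset hv (hK'R.trans hRsub)
        · intro i hi j hj hij
          rcases Finset.mem_insert.mp hi with hi' | hi'
          · rcases Finset.mem_insert.mp hj with hj' | hj'
            · subst hi'; subst hj'; exact absurd hij (lt_irrefl _)
            · subst hi'
              have hcol := (Finset.mem_filter.mp (hK'R hj')).2
              rw [if_pos hij] at hcol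
              exact hcol
          · rcases Finset.mem_insert.mp hj with hj' | hj'
            · subst hj'
              have hcol := (Finset.mem_filter.mp (hK'R hi')).2
              rw [if_neg (not_lt_of_gt hij)] at hcol
              exact hcol
            · exact hK'red i hi' j hj' hij
        · rw [Finset.sum_insert hvK']
          have hc0 : (0:ℝ) < (S.card:ℝ) * Real.exp (-(r v)) := mul_pos hmpos (Real.exp_pos _)
          have hlog : Real.log ((S.card:ℝ) * Real.exp (-(r v))) ≤ Real.log R.card :=
            Real.log_le_log hc0 hpR
          rw [Real.log_mul (ne_of_gt hmpos) (Real.exp_ne_zero _), Real.log_exp] at hlog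
          linarith
      · -- blue neighborhood is big
        have hBk : B.card ≤ k := by
          have h1 : B.card ≤ (S.erase v).card := Finset.card_le_card (Finset.filter_subset _ _)
          rw [Finset.card_erase_of_mem hv] at h1
          omega
        obtain ⟨K', L', hK'B, hL'B, hK'red, hL'blue, hsum⟩ := IH B hBk
        have hvL' : v ∉ L' := fun h => hvB (hL'B h)
        refine ⟨K', insert v L', hK'B.trans hBsub, ?_, hK'red, ?_, ?_⟩
        · exact Finset.insert_subset hv (hL'B.trans hBsub)
        · intro i hi j hj hij
          rcases Finset.mem_insert.mp hi with hi' | hi'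
          · rcases Finset.mem_insert.mp hj with hj' | hj'
            · subst hi'; subst hj'; exact absurd hij (lt_irrefl _)
            · subst hi'
              have hcol := (Finset.mem_filter.mp (hL'B hj')).2
              rw [if_pos hij] at hcol
              exact hcol
          · rcases Finset.mem_insert.mp hj with hj' | hj'
            · subst hj'
              have hcol := (Finset.mem_filter.mp (hL'B hi')).2
              rw [if_neg (not_lt_of_gt hij)] at hcol
              exact hcol
            · exact hL'blue i hi' j hj' hij
        · rw [Finset.sum_insert hvL']
          have hc0 : (0:ℝ) < (S.card:ℝ) * Real.exp (-(b v)) := mul_pos hmpos (Real.exp_pos _)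
          have hlog : Real.log ((S.card:ℝ) * Real.exp (-(b v))) ≤ Real.log B.card :=
            Real.log_le_log hc0 hpB
          rw [Real.log_mul (ne_of_gt hmpos) (Real.exp_ne_zero _), Real.log_exp] at hlog
          linarith

/-- Weighted Ramsey theorem, Lemma 3.2.
If the edges of `K_n` are 2-colored and each vertex `v` carries positive weights `r v`,
`b v` with `b v ≥ ln (4 / r v)` whenever `r v ≤ b v` and `r v ≥ ln (4 / b v)` whenever
`b v ≤ r v`, then there is a red clique `K` with `∑_{v ∈ K} r v ≥ (1/2) ln n` or a blue
clique `L` with `∑_{v ∈ L} b v ≥ (1/2) ln n`. -/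
theorem weighted_ramsey (n : ℕ) (c : Fin n → Fin n → Bool)
    (r b : Fin n → ℝ) (hr : ∀ v, 0 < r v) (hb : ∀ v, 0 < b v)
    (hrb : ∀ v, r v ≤ b v → Real.log (4 / r v) ≤ b v)
    (hbr : ∀ v, b v ≤ r v → Real.log (4 / b v) ≤ r v) :
    (∃ K : Finset (Fin n), (∀ i ∈ K, ∀ j ∈ K, i < j → c i j = true) ∧
      (1 / 2) * Real.log n ≤ ∑ v ∈ K, r v) ∨
    (∃ L : Finset (Fin n), (∀ i ∈ L, ∀ j ∈ L, i < j → c i j = false) ∧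
      (1 / 2) * Real.log n ≤ ∑ v ∈ L, b v) := by
  obtain ⟨K, L, -, -, hK, hL, hsum⟩ :=
    weighted_ramsey_main n c r b hr hb hrb hbr n Finset.univ (by simp)
  rw [Finset.card_univ, Fintype.card_fin] at hsum
  rcases le_total (∑ v ∈ K, r v) (∑ v ∈ L, b v) with h | h
  · exact Or.inr ⟨L, hL, by linarith⟩
  · exact Or.inl ⟨K, hK, by linarith⟩
end

section
/- Let c > 0 be a real number. Suppose that the edges of the complete graph on n vertices have been 2-colored in red and blue and that each vertex v has been assigned positive real weights r_v and b_v satisfying: b_v ≥ c·ln(4c/r_v) whenever r_v ≤ b_v, and r_v ≥ c·ln(4c/b_v) whenever b_v ≤ r_v. Then there exists either a red clique K with ∑_{v ∈ K} r_v ≥ (c/2)·ln n or a blue clique L with ∑_{v ∈ L} b_v ≥ (c/2)·ln n. -/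
lemma exp_neg_add_exp_neg_le_one {t s : ℝ} (ht : 0 < t) (hts : t ≤ s)
    (h : Real.log (4 / t) ≤ s) : Real.exp (-t) + Real.exp (-s) ≤ 1 := by
  rcases le_or_gt t 3 with h3 | h3
  · have h1 : Real.exp (-t) ≤ (1 + t)⁻¹ := by
      rw [Real.exp_neg]
      exact inv_anti₀ (by linarith) (by linarith [Real.add_one_le_exp t])
    have h2 : Real.exp (-s) ≤ t / 4 := by
      have hh : Real.exp (-s) ≤ Real.exp (-(Real.log (4/t))) := by
        apply Real.exp_le_exp.mpr; linarith
      rw [Real.exp_neg, Real.exp_neg, Real.exp_log (by positivity)] at hh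
      rw [Real.exp_neg]
      calc (Real.exp s)⁻¹ ≤ (4/t)⁻¹ := hh
        _ = t/4 := by rw [inv_div]
    have h4 : (1 + t)⁻¹ + t / 4 ≤ 1 := by
      rw [inv_eq_one_div, div_add_div _ _ (by linarith : (1:ℝ)+t ≠ 0) (by norm_num : (4:ℝ) ≠ 0),
        div_le_one (by nlinarith)]
      nlinarith
    linarith
  · have h1 : Real.exp (-t) ≤ Real.exp (-3) := by
      apply Real.exp_le_exp.mpr; linarith
    have h2 : Real.exp (-s) ≤ Real.exp (-3) := by
      apply Real.exp_le_exp.mpr; linarith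
    have h5 : Real.exp (-3 : ℝ) ≤ 1/2 := by
      rw [Real.exp_neg]
      have h6 : (2:ℝ) ≤ Real.exp 3 := by linarith [Real.add_one_le_exp (3:ℝ)]
      calc (Real.exp 3)⁻¹ ≤ (2:ℝ)⁻¹ := inv_anti₀ (by norm_num) h6
        _ = 1/2 := by norm_num
    linarith

lemma ramsey_aux {n : ℕ} (c : Fin n → Fin n → Bool) (α β : Fin n → ℝ)
    (hα : ∀ v, 0 < α v) (hβ : ∀ v, 0 < β v)
    (h : ∀ v, (α v)⁻¹ + (β v)⁻¹ ≤ 1) (S : Finset (Fin n)) :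
    ∃ K L : Finset (Fin n), K ⊆ S ∧ L ⊆ S ∧
      (∀ i ∈ K, ∀ j ∈ K, i < j → c i j = true) ∧
      (∀ i ∈ L, ∀ j ∈ L, i < j → c i j = false) ∧
      (S.card + 1 : ℝ) ≤ (∏ v ∈ K, α v) * (∏ v ∈ L, β v) := by
  induction S using Finset.strongInduction with
  | _ S ih =>
    rcases S.eq_empty_or_nonempty with rfl | ⟨v, hv⟩
    · exact ⟨∅, ∅, subset_rfl, subset_rfl, by simp, by simp, by simp⟩
    · set R : Finset (Fin n) :=
        (S.erase v).filter (fun u => (if u < v then c u v else c v u) = true) with hR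
      set B : Finset (Fin n) :=
        (S.erase v).filter (fun u => ¬((if u < v then c u v else c v u) = true)) with hB
      have hpos : 1 ≤ S.card := Finset.card_pos.mpr ⟨v, hv⟩
      have hcard : R.card + B.card + 1 = S.card := by
        rw [hR, hB, Finset.card_filter_add_card_filter_not,
          Finset.card_erase_of_mem hv]
        omega
      have hRS : R ⊂ S := Finset.ssubset_of_subset_of_ssubset (Finset.filter_subset _ _) (Finset.erase_ssubset hv)
      have hBS : B ⊂ S := Finset.ssubset_of_subset_of_ssubset (Finset.filter_subset _ _) (Finset.erase_ssubset hv)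
      by_cases h1 : ((S.card : ℝ) + 1) ≤ α v * (R.card + 1)
      · obtain ⟨K', L', hK'R, hL'R, hKred, hLblue, hprod⟩ := ih R hRS
        have hvK' : v ∉ K' := fun hmem => (Finset.mem_erase.mp ((Finset.filter_subset _ _) (hK'R hmem))).1 rfl
        refine ⟨insert v K', L', ?_, hL'R.trans hRS.subset, ?_, hLblue, ?_⟩
        · exact Finset.insert_subset hv (hK'R.trans hRS.subset)
        · intro i hi j hj hij
          rcases Finset.mem_insert.mp hi with rfl | hi' <;>
            rcases Finset.mem_insert.mp hj with rfl | hj'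
          · exact absurd hij (lt_irrefl _)
          · -- i = v, j ∈ K' ⊆ R, v < j
            have hjR := hK'R hj'
            have := (Finset.mem_filter.mp hjR).2
            rw [if_neg (not_lt.mpr hij.le)] at this
            exact this
          · -- i ∈ K', j = v, i < v
            have hiR := hK'R hi'
            have := (Finset.mem_filter.mp hiR).2
            rw [if_pos hij] at this
            exact this
          · exact hKred i hi' j hj' hij
        · rw [Finset.prod_insert hvK', mul_assoc]
          calc (S.card : ℝ) + 1 ≤ α v * (R.card + 1) := h1
            _ ≤ α v * ((∏ v ∈ K', α v) * ∏ v ∈ L', β v) :=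
              mul_le_mul_of_nonneg_left hprod (hα v).le
      · have h2 : ((S.card : ℝ) + 1) ≤ β v * (B.card + 1) := by
          by_contra h2
          push_neg at h1 h2
          have hav := hα v; have hbv := hβ v; have hsum := h v
          have hN : (S.card : ℝ) + 1 = ((R.card : ℝ) + 1) + ((B.card : ℝ) + 1) := by
            have := hcard
            push_cast [← this]
            ring
          have hx : ((R.card : ℝ) + 1) < ((S.card : ℝ) + 1) * (α v)⁻¹ := by
            rw [← div_eq_mul_inv, lt_div_iff₀ hav, mul_comm]
            exact h1
          have hy : ((B.card : ℝ) + 1) < ((S.card : ℝ) + 1) * (β v)⁻¹ := by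
            rw [← div_eq_mul_inv, lt_div_iff₀ hbv, mul_comm]
            exact h2
          have hNpos : (0:ℝ) < (S.card : ℝ) + 1 := by positivity
          have : ((S.card : ℝ) + 1) * ((α v)⁻¹ + (β v)⁻¹) ≤ ((S.card : ℝ) + 1) * 1 :=
            mul_le_mul_of_nonneg_left hsum hNpos.le
          nlinarith
        obtain ⟨K', L', hK'B, hL'B, hKred, hLblue, hprod⟩ := ih B hBS
        have hvL' : v ∉ L' := fun hmem => (Finset.mem_erase.mp ((Finset.filter_subset _ _) (hL'B hmem))).1 rfl
        refine ⟨K', insert v L', hK'B.trans hBS.subset, ?_, hKred, ?_, ?_⟩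
        · exact Finset.insert_subset hv (hL'B.trans hBS.subset)
        · intro i hi j hj hij
          rcases Finset.mem_insert.mp hi with rfl | hi' <;>
            rcases Finset.mem_insert.mp hj with rfl | hj'
          · exact absurd hij (lt_irrefl _)
          · have hjB := hL'B hj'
            have := (Finset.mem_filter.mp hjB).2
            rw [if_neg (not_lt.mpr hij.le)] at this
            simpa using this
          · have hiB := hL'B hi'
            have := (Finset.mem_filter.mp hiB).2
            rw [if_pos hij] at this
            simpa using this
          · exact hLblue i hi' j hj' hij
        · rw [Finset.prod_insert hvL']
          calc (S.card : ℝ) + 1 ≤ β v * (B.card + 1) := h2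
            _ ≤ β v * ((∏ v ∈ K', α v) * ∏ v ∈ L', β v) :=
              mul_le_mul_of_nonneg_left hprod (hβ v).le
            _ = (∏ v ∈ K', α v) * (β v * ∏ v ∈ L', β v) := by ring

/-- Weighted Ramsey theorem, scaled version, Lemma 3.3.
Let `c₀ > 0`. If the edges of `K_n` are 2-colored and each vertex `v` carries positive
weights `r v`, `b v` with `b v ≥ c₀ ln (4c₀ / r v)` whenever `r v ≤ b v` and
`r v ≥ c₀ ln (4c₀ / b v)` whenever `b v ≤ r v`, then there is a red clique `K` with
`∑_{v ∈ K} r v ≥ (c₀/2) ln n` or a blue clique `L` with `∑_{v ∈ L} b v ≥ (c₀/2) ln n`. -/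
theorem weighted_ramsey_scaled (c₀ : ℝ) (hc₀ : 0 < c₀)
    (n : ℕ) (c : Fin n → Fin n → Bool)
    (r b : Fin n → ℝ) (hr : ∀ v, 0 < r v) (hb : ∀ v, 0 < b v)
    (hrb : ∀ v, r v ≤ b v → c₀ * Real.log (4 * c₀ / r v) ≤ b v)
    (hbr : ∀ v, b v ≤ r v → c₀ * Real.log (4 * c₀ / b v) ≤ r v) :
    (∃ K : Finset (Fin n), (∀ i ∈ K, ∀ j ∈ K, i < j → c i j = true) ∧
      (c₀ / 2) * Real.log n ≤ ∑ v ∈ K, r v) ∨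
    (∃ L : Finset (Fin n), (∀ i ∈ L, ∀ j ∈ L, i < j → c i j = false) ∧
      (c₀ / 2) * Real.log n ≤ ∑ v ∈ L, b v) := by
  have key : ∀ x y : ℝ, 0 < x → 0 < y → c₀ * Real.log (4 * c₀ / x) ≤ y → x ≤ y →
      Real.exp (-(x / c₀)) + Real.exp (-(y / c₀)) ≤ 1 := by
    intro x y hx hy hxy hle
    apply exp_neg_add_exp_neg_le_one (div_pos hx hc₀) (by gcongr)
    have h4 : (4 : ℝ) / (x / c₀) = 4 * c₀ / x := by
      field_simp
    rw [h4, le_div_iff₀' hc₀]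
    exact hxy
  have hcond : ∀ v, (Real.exp (r v / c₀))⁻¹ + (Real.exp (b v / c₀))⁻¹ ≤ 1 := by
    intro v
    rw [← Real.exp_neg, ← Real.exp_neg]
    rcases le_total (r v) (b v) with hle | hle
    · exact key _ _ (hr v) (hb v) (hrb v hle) hle
    · rw [add_comm]
      exact key _ _ (hb v) (hr v) (hbr v hle) hle
  obtain ⟨K, L, -, -, hKred, hLblue, hprod⟩ :=
    ramsey_aux c (fun v => Real.exp (r v / c₀)) (fun v => Real.exp (b v / c₀))
      (fun v => Real.exp_pos _) (fun v => Real.exp_pos _) hcond Finset.univ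
  rw [Finset.card_univ, Fintype.card_fin, ← Real.exp_sum, ← Real.exp_sum,
    ← Real.exp_add] at hprod
  have hX : Real.log ((n : ℝ) + 1) ≤ ∑ v ∈ K, r v / c₀ + ∑ v ∈ L, b v / c₀ := by
    have := Real.log_le_log (by positivity) hprod
    rwa [Real.log_exp] at this
  have hlogn : Real.log n ≤ Real.log ((n : ℝ) + 1) := by
    rcases Nat.eq_zero_or_pos n with rfl | hn
    · simp
    · exact Real.log_le_log (by exact_mod_cast hn) (by linarith)
  rw [← Finset.sum_div, ← Finset.sum_div] at hX
  have hmain : c₀ * Real.log n ≤ ∑ v ∈ K, r v + ∑ v ∈ L, b v := by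
    have h5 : Real.log n ≤ (∑ v ∈ K, r v + ∑ v ∈ L, b v) / c₀ := by
      rw [add_div]; linarith
    calc c₀ * Real.log n ≤ c₀ * ((∑ v ∈ K, r v + ∑ v ∈ L, b v) / c₀) :=
          mul_le_mul_of_nonneg_left h5 hc₀.le
      _ = ∑ v ∈ K, r v + ∑ v ∈ L, b v := by field_simp
  by_cases hK2 : (c₀ / 2) * Real.log n ≤ ∑ v ∈ K, r v
  · exact Or.inl ⟨K, hKred, hK2⟩
  · push_neg at hK2
    exact Or.inr ⟨L, hLblue, by linarith⟩
end

section
/- Let S be a finite set of integers with |S| ≥ 6 and let I = [a, b] be an interval of integers with S ⊆ I. Then there exist subsets T₁, T₂ ⊆ S and intervals of integers I₁, I₂ with T₁ ⊆ I₁ and T₂ ⊆ I₂ such that the ordered pair (T₁, T₂) is separated, and for j = 1, 2 one has d_{I_j}(T_j) ≥ d_I(S)/2 and |I_j| ≥ |S|/12. -/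
/-- An ordered pair `(T₁, T₂)` of (nonempty, finite) sets of integers is *separated* if,
for `j = 1, 2`, `min(T₂) - max(T₁) > max(T_j) - min(T_j)`. -/
def Separated (T₁ T₂ : Finset ℤ) : Prop :=
  ∃ h₁ : T₁.Nonempty, ∃ h₂ : T₂.Nonempty,
    T₁.max' h₁ - T₁.min' h₁ < T₂.min' h₂ - T₁.max' h₁ ∧
    T₂.max' h₂ - T₂.min' h₂ < T₂.min' h₂ - T₁.max' h₁

/-- The density `d_I(S) = |S| / |I|` of a finite set `S` of integers with respect to a
finite set (interval) `I` containing it. -/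
noncomputable def dens (I S : Finset ℤ) : ℝ := (S.card : ℝ) / (I.card : ℝ)

private lemma recArith (n L m' c Λ' w : ℤ)
    (hn : 0 ≤ n) (hL : 0 ≤ L) (hc : 0 ≤ c)
    (hΛ : 14 ≤ Λ' + w) (h3 : Λ' + w ≤ 3 * w + 2)
    (hinv2 : n * (Λ' + w) ≤ (m' + c) * L)
    (hinv1 : n ^ 2 * (Λ' + w) ≤ (m' + c) ^ 2 * L)
    (hn2 : n ^ 2 ≤ (m' + c) * L)
    (h6 : 6 * c < m' + c) :
    n * Λ' ≤ m' * L ∧ n ^ 2 * Λ' ≤ m' ^ 2 * L := by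
  have hm : (0:ℤ) ≤ m' + c := by linarith
  have h5 : 5 * (m' + c) + 1 ≤ 6 * m' := by linarith
  constructor
  · have e1 : (5 * (m' + c) + 1) * L ≤ (6 * m') * L :=
      mul_le_mul_of_nonneg_right h5 hL
    have e2 : n * (Λ' + w - 2) ≤ n * (3 * w) :=
      mul_le_mul_of_nonneg_left (by linarith) hn
    have e3 : n * 14 ≤ n * (Λ' + w) := mul_le_mul_of_nonneg_left hΛ hn
    nlinarith [e1, e2, e3, hinv2, hL]
  · have h50 : (0:ℤ) ≤ 5 * (m' + c) + 1 := by linarith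
    have h5sq : (5 * (m' + c) + 1) ^ 2 ≤ (6 * m') ^ 2 := pow_le_pow_left₀ h50 h5 2
    have e1 : (5 * (m' + c) + 1) ^ 2 * L ≤ (6 * m') ^ 2 * L :=
      mul_le_mul_of_nonneg_right h5sq hL
    have e2 : n ^ 2 * (Λ' + w - 2) ≤ n ^ 2 * (3 * w) :=
      mul_le_mul_of_nonneg_left (by linarith) (sq_nonneg n)
    have e3 : n ^ 2 * 14 ≤ n ^ 2 * (Λ' + w) := mul_le_mul_of_nonneg_left hΛ (sq_nonneg n)
    nlinarith [e1, e2, e3, hinv1, hn2, hL]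

private lemma key (n L q : ℕ) (hn : 13 ≤ n) (hq1 : 12 * q ≤ n + 11) (hq2 : n ≤ 12 * q)
    (hsp : 2 * L < n * q) :
    ∀ Λ : ℕ, ∀ u v : ℤ, ∀ S' : Finset ℤ,
      (Finset.Icc u v).card = Λ → S'.Nonempty → S' ⊆ Finset.Icc u v →
      n * Λ ≤ S'.card * L → n ^ 2 * Λ ≤ S'.card ^ 2 * L →
      ∃ T₁ T₂ : Finset ℤ, T₁ ⊆ S' ∧ T₂ ⊆ S' ∧ Separated T₁ T₂ ∧
        n * q ≤ 2 * L * T₁.card ∧ n * q ≤ 2 * L * T₂.card ∧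
        (∀ x ∈ T₁, ∀ y ∈ T₁, (n : ℤ) * (y - x + 1) ≤ (2 * L * T₁.card : ℤ)) ∧
        (∀ x ∈ T₂, ∀ y ∈ T₂, (n : ℤ) * (y - x + 1) ≤ (2 * L * T₂.card : ℤ)) := by
  intro Λ
  induction Λ using Nat.strong_induction_on with
  | _ Λ IH =>
  intro u v S' hΛcard hne hsub hinv2 hinv1
  set m := S'.card with hm
  have hm0 : 0 < m := Finset.card_pos.mpr hne
  have hn0 : 0 < n := by omega
  have huv : u ≤ v := by
    obtain ⟨x, hx⟩ := hne
    have hx' := Finset.mem_Icc.mp (hsub hx)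
    linarith [hx'.1, hx'.2]
  have hΛZ : (Λ : ℤ) = v + 1 - u := by
    rw [← hΛcard, Int.card_Icc, Int.toNat_of_nonneg (by linarith)]
  have hmΛ : m ≤ Λ := hΛcard ▸ Finset.card_le_card hsub
  have hL0 : 0 < L := by
    rcases Nat.eq_zero_or_pos L with h | h
    · exfalso
      subst h
      have h1 : n * Λ ≤ 0 := by simpa using hinv2
      have h2 : n * Λ = 0 := Nat.le_zero.mp h1
      rcases Nat.mul_eq_zero.mp h2 with h' | h' <;> omega
    · exact h
  have hmL : n ^ 2 ≤ m * L := by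
    have h1 : n ^ 2 * m ≤ n ^ 2 * Λ := Nat.mul_le_mul le_rfl hmΛ
    have h2 : m * n ^ 2 ≤ m * (m * L) := by
      calc m * n ^ 2 = n ^ 2 * m := by ring
        _ ≤ n ^ 2 * Λ := h1
        _ ≤ m ^ 2 * L := hinv1
        _ = m * (m * L) := by ring
    exact Nat.le_of_mul_le_mul_left h2 hm0
  have hm14 : 14 ≤ m := by
    have h2 : m * (2 * L) < m * (n * q) := mul_lt_mul_of_pos_left hsp hm0
    have h3 : 2 * n < m * q := by
      have ha : n * (2 * n) ≤ n * (m * q) := by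
        calc n * (2 * n) = 2 * n ^ 2 := by ring
          _ ≤ 2 * (m * L) := by omega
          _ = m * (2 * L) := by ring
          _ ≤ m * (n * q) := le_of_lt h2
          _ = n * (m * q) := by ring
      have := Nat.le_of_mul_le_mul_left ha hn0
      -- strictness
      by_contra hcon
      push_neg at hcon
      have : m * q ≤ 2 * n := hcon
      have hb : m * (n * q) ≤ n * (2 * n) := by
        calc m * (n * q) = n * (m * q) := by ring
          _ ≤ n * (2 * n) := Nat.mul_le_mul le_rfl this
      have hc2 : n * (2*n) = 2*n^2 := by ring
      have : m * (2 * L) < 2 * n ^ 2 := by omega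
      have : 2 * n ^ 2 ≤ m * (2 * L) := by
        calc 2 * n ^ 2 ≤ 2 * (m * L) := by omega
          _ = m * (2 * L) := by ring
      omega
    have h4 : 24 * n + 12 ≤ m * (n + 11) := by
      calc 24 * n + 12 = 12 * (2 * n + 1) := by ring
        _ ≤ 12 * (m * q) := Nat.mul_le_mul le_rfl (by omega)
        _ = m * (12 * q) := by ring
        _ ≤ m * (n + 11) := Nat.mul_le_mul le_rfl hq1
    by_contra hcon
    push_neg at hcon
    have hm13 : m ≤ 13 := by omega
    have : m * (n + 11) ≤ 13 * (n + 11) := Nat.mul_le_mul hm13 le_rfl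
    omega
  have hΛ14 : 14 ≤ Λ := le_trans hm14 hmΛ
  set w := Λ / 3 with hwdef
  have h3w : 3 * w ≤ Λ := by omega
  have hw3 : Λ ≤ 3 * w + 2 := by omega
  have hw4 : 4 ≤ w := by omega
  set A := S'.filter (fun x => x < u + (w:ℤ)) with hAdef
  set C := S'.filter (fun x => v - (w:ℤ) < x) with hCdef
  have hAS : A ⊆ S' := Finset.filter_subset _ _
  have hCS : C ⊆ S' := Finset.filter_subset _ _
  have hAmem : ∀ x ∈ A, u ≤ x ∧ x ≤ u + (w:ℤ) - 1 := by
    intro x hxA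
    have h1 := Finset.mem_filter.mp hxA
    have h2 := Finset.mem_Icc.mp (hsub h1.1)
    omega
  have hCmem : ∀ x ∈ C, v - (w:ℤ) + 1 ≤ x ∧ x ≤ v := by
    intro x hxC
    have h1 := Finset.mem_filter.mp hxC
    have h2 := Finset.mem_Icc.mp (hsub h1.1)
    omega
  by_cases hA6 : m ≤ 6 * A.card
  · by_cases hC6 : m ≤ 6 * C.card
    · -- success case
      have hApos : 0 < A.card := by omega
      have hCpos : 0 < C.card := by omega
      have hAne : A.Nonempty := Finset.card_pos.mp hApos
      have hCne : C.Nonempty := Finset.card_pos.mp hCpos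
      have hwZ : 3 * (w:ℤ) ≤ (Λ:ℤ) := by exact_mod_cast h3w
      have hQA : n * q ≤ 2 * L * A.card := by
        have h3q : 3 * q ≤ n := by omega
        have hstep : 3 * (n * q) ≤ 3 * (2 * L * A.card) := by
          calc 3 * (n * q) = n * (3 * q) := by ring
            _ ≤ n * n := Nat.mul_le_mul le_rfl h3q
            _ = n ^ 2 := by ring
            _ ≤ m * L := hmL
            _ ≤ 6 * A.card * L := Nat.mul_le_mul hA6 le_rfl
            _ = 3 * (2 * L * A.card) := by ring
        exact Nat.le_of_mul_le_mul_left hstep (by norm_num)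
      have hQC : n * q ≤ 2 * L * C.card := by
        have h3q : 3 * q ≤ n := by omega
        have hstep : 3 * (n * q) ≤ 3 * (2 * L * C.card) := by
          calc 3 * (n * q) = n * (3 * q) := by ring
            _ ≤ n * n := Nat.mul_le_mul le_rfl h3q
            _ = n ^ 2 := by ring
            _ ≤ m * L := hmL
            _ ≤ 6 * C.card * L := Nat.mul_le_mul hC6 le_rfl
            _ = 3 * (2 * L * C.card) := by ring
        exact Nat.le_of_mul_le_mul_left hstep (by norm_num)
      have hnwA : n * w ≤ 2 * L * A.card := by
        have hstep : 3 * (n * w) ≤ 3 * (2 * L * A.card) := by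
          calc 3 * (n * w) = n * (3 * w) := by ring
            _ ≤ n * Λ := Nat.mul_le_mul le_rfl h3w
            _ ≤ m * L := hinv2
            _ ≤ 6 * A.card * L := Nat.mul_le_mul hA6 le_rfl
            _ = 3 * (2 * L * A.card) := by ring
        exact Nat.le_of_mul_le_mul_left hstep (by norm_num)
      have hnwC : n * w ≤ 2 * L * C.card := by
        have hstep : 3 * (n * w) ≤ 3 * (2 * L * C.card) := by
          calc 3 * (n * w) = n * (3 * w) := by ring
            _ ≤ n * Λ := Nat.mul_le_mul le_rfl h3w
            _ ≤ m * L := hinv2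
            _ ≤ 6 * C.card * L := Nat.mul_le_mul hC6 le_rfl
            _ = 3 * (2 * L * C.card) := by ring
        exact Nat.le_of_mul_le_mul_left hstep (by norm_num)
      refine ⟨A, C, hAS, hCS, ?_, hQA, hQC, ?_, ?_⟩
      · refine ⟨hAne, hCne, ?_, ?_⟩
        · have h1 := hAmem _ (A.min'_mem hAne)
          have h2 := hAmem _ (A.max'_mem hAne)
          have h3 := hCmem _ (C.min'_mem hCne)
          omega
        · have h2 := hAmem _ (A.max'_mem hAne)
          have h3 := hCmem _ (C.min'_mem hCne)
          have h4 := hCmem _ (C.max'_mem hCne)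
          omega
      · intro x hx y hy
        have hx' := hAmem x hx
        have hy' := hAmem y hy
        have hyx : y - x + 1 ≤ (w:ℤ) := by omega
        calc (n:ℤ) * (y - x + 1) ≤ (n:ℤ) * (w:ℤ) :=
              mul_le_mul_of_nonneg_left hyx (by positivity)
          _ ≤ (2 * L * A.card : ℤ) := by exact_mod_cast hnwA
      · intro x hx y hy
        have hx' := hCmem x hx
        have hy' := hCmem y hy
        have hyx : y - x + 1 ≤ (w:ℤ) := by omega
        calc (n:ℤ) * (y - x + 1) ≤ (n:ℤ) * (w:ℤ) :=
              mul_le_mul_of_nonneg_left hyx (by positivity)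
          _ ≤ (2 * L * C.card : ℤ) := by exact_mod_cast hnwC
    · -- recurse: trim the right window C
      push_neg at hC6
      set S'' := S' \ C with hS''def
      have hCsub : C ⊆ S' := hCS
      have hcards : S''.card = m - C.card := Finset.card_sdiff_of_subset hCsub
      have hClt : C.card < m := by omega
      have hma : S''.card + C.card = m := by omega
      have hm'pos : 0 < S''.card := by omega
      have hS''ne : S''.Nonempty := Finset.card_pos.mp hm'pos
      have hS''sub : S'' ⊆ Finset.Icc u (v - (w:ℤ)) := by
        intro x hx
        have hx1 := Finset.mem_sdiff.mp hx
        have hx2 := Finset.mem_Icc.mp (hsub hx1.1)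
        have hx3 : ¬ (v - (w:ℤ) < x) := by
          intro hcon
          exact hx1.2 (Finset.mem_filter.mpr ⟨hx1.1, hcon⟩)
        rw [Finset.mem_Icc]
        omega
      have hwle : w ≤ Λ := by omega
      have hΛ'card : (Finset.Icc u (v - (w:ℤ))).card = Λ - w := by
        rw [Int.card_Icc]
        have he : v - (w:ℤ) + 1 - u = ((Λ - w : ℕ) : ℤ) := by
          rw [Nat.cast_sub hwle]
          omega
        rw [he, Int.toNat_natCast]
      have hZ := recArith (n:ℤ) (L:ℤ) (S''.card:ℤ) (C.card:ℤ) ((Λ - w : ℕ):ℤ) (w:ℤ)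
        (by positivity) (by positivity) (by positivity)
        (by exact_mod_cast (show (14:ℕ) ≤ (Λ - w) + w by omega))
        (by exact_mod_cast (show (Λ - w) + w ≤ 3 * w + 2 by omega))
        (by exact_mod_cast (show n * ((Λ - w) + w) ≤ (S''.card + C.card) * L by
              rw [hma, (show (Λ - w) + w = Λ by omega)]; exact hinv2))
        (by exact_mod_cast (show n ^ 2 * ((Λ - w) + w) ≤ (S''.card + C.card) ^ 2 * L by
              rw [hma, (show (Λ - w) + w = Λ by omega)]; exact hinv1))
        (by exact_mod_cast (show n ^ 2 ≤ (S''.card + C.card) * L by rw [hma]; exact hmL))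
        (by exact_mod_cast (show 6 * C.card < S''.card + C.card by omega))
      have hz2 : n * (Λ - w) ≤ S''.card * L := by exact_mod_cast hZ.1
      have hz1 : n ^ 2 * (Λ - w) ≤ S''.card ^ 2 * L := by exact_mod_cast hZ.2
      obtain ⟨T₁, T₂, hT1, hT2, hsep, hq1', hq2', hd1, hd2⟩ :=
        IH (Λ - w) (by omega) u (v - (w:ℤ)) S'' hΛ'card hS''ne hS''sub hz2 hz1
      exact ⟨T₁, T₂, hT1.trans (Finset.sdiff_subset), hT2.trans (Finset.sdiff_subset),
        hsep, hq1', hq2', hd1, hd2⟩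
  · -- recurse: trim the left window A
    push_neg at hA6
    set S'' := S' \ A with hS''def
    have hcards : S''.card = m - A.card := Finset.card_sdiff_of_subset hAS
    have hAlt : A.card < m := by omega
    have hma : S''.card + A.card = m := by omega
    have hm'pos : 0 < S''.card := by omega
    have hS''ne : S''.Nonempty := Finset.card_pos.mp hm'pos
    have hS''sub : S'' ⊆ Finset.Icc (u + (w:ℤ)) v := by
      intro x hx
      have hx1 := Finset.mem_sdiff.mp hx
      have hx2 := Finset.mem_Icc.mp (hsub hx1.1)
      have hx3 : ¬ (x < u + (w:ℤ)) := by
        intro hcon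
        exact hx1.2 (Finset.mem_filter.mpr ⟨hx1.1, hcon⟩)
      rw [Finset.mem_Icc]
      omega
    have hwle : w ≤ Λ := by omega
    have hΛ'card : (Finset.Icc (u + (w:ℤ)) v).card = Λ - w := by
      rw [Int.card_Icc]
      have he : v + 1 - (u + (w:ℤ)) = ((Λ - w : ℕ) : ℤ) := by
        rw [Nat.cast_sub hwle]
        omega
      rw [he, Int.toNat_natCast]
    have hZ := recArith (n:ℤ) (L:ℤ) (S''.card:ℤ) (A.card:ℤ) ((Λ - w : ℕ):ℤ) (w:ℤ)
      (by positivity) (by positivity) (by positivity)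
      (by exact_mod_cast (show (14:ℕ) ≤ (Λ - w) + w by omega))
      (by exact_mod_cast (show (Λ - w) + w ≤ 3 * w + 2 by omega))
      (by exact_mod_cast (show n * ((Λ - w) + w) ≤ (S''.card + A.card) * L by
            rw [hma, (show (Λ - w) + w = Λ by omega)]; exact hinv2))
      (by exact_mod_cast (show n ^ 2 * ((Λ - w) + w) ≤ (S''.card + A.card) ^ 2 * L by
            rw [hma, (show (Λ - w) + w = Λ by omega)]; exact hinv1))
      (by exact_mod_cast (show n ^ 2 ≤ (S''.card + A.card) * L by rw [hma]; exact hmL))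
      (by exact_mod_cast (show 6 * A.card < S''.card + A.card by omega))
    have hz2 : n * (Λ - w) ≤ S''.card * L := by exact_mod_cast hZ.1
    have hz1 : n ^ 2 * (Λ - w) ≤ S''.card ^ 2 * L := by exact_mod_cast hZ.2
    obtain ⟨T₁, T₂, hT1, hT2, hsep, hq1', hq2', hd1, hd2⟩ :=
      IH (Λ - w) (by omega) (u + (w:ℤ)) v S'' hΛ'card hS''ne hS''sub hz2 hz1
    exact ⟨T₁, T₂, hT1.trans (Finset.sdiff_subset), hT2.trans (Finset.sdiff_subset),
      hsep, hq1', hq2', hd1, hd2⟩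

private lemma wrap (n L q : ℕ) (hL0 : 0 < L) (hq2 : n ≤ 12 * q) (hq0 : 0 < q)
    (T : Finset ℤ) (hT : T.Nonempty)
    (hQ : n * q ≤ 2 * L * T.card)
    (hD : ∀ x ∈ T, ∀ y ∈ T, (n : ℤ) * (y - x + 1) ≤ (2 * L * T.card : ℤ)) :
    ∃ p r : ℤ, T ⊆ Finset.Icc p r ∧
      (n : ℝ) / (L : ℝ) / 2 ≤ dens (Finset.Icc p r) T ∧
      (n : ℝ) / 12 ≤ ((Finset.Icc p r).card : ℝ) := by
  set x := T.min' hT with hx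
  set y := T.max' hT with hy
  have hxy : x ≤ y := T.min'_le y (T.max'_mem hT)
  set M : ℤ := max (y - x + 1) (q : ℤ) with hMdef
  have hMq : (q : ℤ) ≤ M := le_max_right _ _
  have hMd : y - x + 1 ≤ M := le_max_left _ _
  have hM0 : (0:ℤ) < M := lt_of_lt_of_le (by exact_mod_cast hq0) hMq
  have hsub : T ⊆ Finset.Icc (y - M + 1) y := by
    intro t ht
    rw [Finset.mem_Icc]
    have h1 : x ≤ t := T.min'_le t ht
    have h2 : t ≤ y := T.le_max' t ht
    omega
  have hcard : ((Finset.Icc (y - M + 1) y).card : ℤ) = M := by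
    rw [Int.card_Icc, Int.toNat_of_nonneg (by omega)]
    ring
  have hnM : (n : ℤ) * M ≤ (2 * L * T.card : ℤ) := by
    rcases max_choice (y - x + 1) ((q : ℤ)) with h | h
    · rw [hMdef, h]; exact hD x (T.min'_mem hT) y (T.max'_mem hT)
    · rw [hMdef, h]
      exact_mod_cast hQ
  have hTcard0 : 0 < T.card := Finset.card_pos.mpr hT
  have hcardR : ((Finset.Icc (y - M + 1) y).card : ℝ) = (M : ℝ) := by
    exact_mod_cast congrArg (fun z : ℤ => (z : ℝ)) hcard
  have hMR0 : (0:ℝ) < (M : ℝ) := by exact_mod_cast hM0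
  refine ⟨y - M + 1, y, hsub, ?_, ?_⟩
  · rw [dens, div_div, hcardR, div_le_div_iff₀ (by positivity) hMR0]
    have h1 : ((n : ℤ) * M : ℝ) ≤ ((2 * L * T.card : ℤ) : ℝ) := by exact_mod_cast hnM
    push_cast at h1 ⊢
    nlinarith [h1]
  · rw [hcardR]
    have h12 : (n : ℤ) ≤ 12 * M := by
      have h' : (n : ℤ) ≤ 12 * (q:ℤ) := by exact_mod_cast hq2
      linarith
    have : (n : ℝ) ≤ 12 * (M : ℝ) := by exact_mod_cast h12
    linarith

/-- Lemma 4.2. Let `S` be a finite set of integers with `|S| ≥ 6` and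
`I = [a, b]` an interval with `S ⊆ I`. Then there are `T₁, T₂ ⊆ S` and intervals
`I₁, I₂` with `T_j ⊆ I_j`, `(T₁, T₂)` separated, `d_{I_j}(T_j) ≥ d_I(S)/2` and
`|I_j| ≥ |S|/12`. -/
theorem separated_pair_exists (S : Finset ℤ) (hS : 6 ≤ S.card)
    (a b : ℤ) (hSI : S ⊆ Finset.Icc a b) :
    ∃ (T₁ T₂ : Finset ℤ) (a₁ b₁ a₂ b₂ : ℤ),
      T₁ ⊆ S ∧ T₂ ⊆ S ∧
      T₁ ⊆ Finset.Icc a₁ b₁ ∧ T₂ ⊆ Finset.Icc a₂ b₂ ∧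
      Separated T₁ T₂ ∧
      dens (Finset.Icc a b) S / 2 ≤ dens (Finset.Icc a₁ b₁) T₁ ∧
      dens (Finset.Icc a b) S / 2 ≤ dens (Finset.Icc a₂ b₂) T₂ ∧
      (S.card : ℝ) / 12 ≤ ((Finset.Icc a₁ b₁).card : ℝ) ∧
      (S.card : ℝ) / 12 ≤ ((Finset.Icc a₂ b₂).card : ℝ) := by
  set n := S.card with hn
  have hSne : S.Nonempty := Finset.card_pos.mp (by omega)
  set L := (Finset.Icc a b).card with hL
  have hnL : n ≤ L := Finset.card_le_card hSI
  have hL0 : 0 < L := by omega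
  set q := (n + 11) / 12 with hq
  have hq1 : 12 * q ≤ n + 11 := by omega
  have hq2 : n ≤ 12 * q := by omega
  have hq0 : 0 < q := by omega
  have hdens : dens (Finset.Icc a b) S = (n : ℝ) / (L : ℝ) := rfl
  by_cases hc : n * q ≤ 2 * L
  · -- sparse case: singletons work
    have hcard1 : 1 < S.card := by omega
    have hlt : S.min' hSne < S.max' hSne := S.min'_lt_max'_of_card hcard1
    set T₁ : Finset ℤ := {S.min' hSne} with hT1def
    set T₂ : Finset ℤ := {S.max' hSne} with hT2def
    have hT1ne : T₁.Nonempty := Finset.singleton_nonempty _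
    have hT2ne : T₂.Nonempty := Finset.singleton_nonempty _
    have hT1card : T₁.card = 1 := Finset.card_singleton _
    have hT2card : T₂.card = 1 := Finset.card_singleton _
    have hsep : Separated T₁ T₂ := by
      refine ⟨hT1ne, hT2ne, ?_, ?_⟩ <;>
        simp [hT1def, hT2def] <;> omega
    have hn2L : n ≤ 2 * L := by
      have := Nat.le_mul_of_pos_right n hq0
      omega
    have hQ1 : n * q ≤ 2 * L * T₁.card := by rw [hT1card]; omega
    have hQ2 : n * q ≤ 2 * L * T₂.card := by rw [hT2card]; omega
    have hD1 : ∀ x ∈ T₁, ∀ y ∈ T₁, (n : ℤ) * (y - x + 1) ≤ (2 * L * T₁.card : ℤ) := by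
      intro x hx y hy
      rw [hT1def, Finset.mem_singleton] at hx hy
      subst hx; subst hy
      rw [hT1card]
      push_cast
      have : (n:ℤ) ≤ 2 * L := by exact_mod_cast hn2L
      linarith
    have hD2 : ∀ x ∈ T₂, ∀ y ∈ T₂, (n : ℤ) * (y - x + 1) ≤ (2 * L * T₂.card : ℤ) := by
      intro x hx y hy
      rw [hT2def, Finset.mem_singleton] at hx hy
      subst hx; subst hy
      rw [hT2card]
      push_cast
      have : (n:ℤ) ≤ 2 * L := by exact_mod_cast hn2L
      linarith
    obtain ⟨p₁, r₁, hsub1, hd1, hc1⟩ := wrap n L q hL0 hq2 hq0 T₁ hT1ne hQ1 hD1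
    obtain ⟨p₂, r₂, hsub2, hd2, hc2⟩ := wrap n L q hL0 hq2 hq0 T₂ hT2ne hQ2 hD2
    refine ⟨T₁, T₂, p₁, r₁, p₂, r₂, ?_, ?_, hsub1, hsub2, hsep, ?_, ?_, hc1, hc2⟩
    · rw [hT1def]
      exact Finset.singleton_subset_iff.mpr (S.min'_mem hSne)
    · rw [hT2def]
      exact Finset.singleton_subset_iff.mpr (S.max'_mem hSne)
    · rw [hdens]; exact hd1
    · rw [hdens]; exact hd2
  · -- dense case: use the key lemma
    push_neg at hc
    have hn13 : 13 ≤ n := by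
      by_contra hcon
      push_neg at hcon
      have : q = 1 := by omega
      rw [this] at hc
      omega
    obtain ⟨T₁, T₂, hT1S, hT2S, hsep, hQ1, hQ2, hD1, hD2⟩ :=
      key n L q hn13 hq1 hq2 hc L a b S hL.symm hSne hSI (le_refl _) (le_refl _)
    obtain ⟨hT1ne, hT2ne, hx1, hx2⟩ := hsep
    have hsep : Separated T₁ T₂ := ⟨hT1ne, hT2ne, hx1, hx2⟩
    obtain ⟨p₁, r₁, hsub1, hd1, hc1⟩ := wrap n L q hL0 hq2 hq0 T₁ hT1ne hQ1 hD1
    obtain ⟨p₂, r₂, hsub2, hd2, hc2⟩ := wrap n L q hL0 hq2 hq0 T₂ hT2ne hQ2 hD2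
    refine ⟨T₁, T₂, p₁, r₁, p₂, r₂, hT1S, hT2S, hsub1, hsub2, hsep, ?_, ?_, hc1, hc2⟩
    · rw [hdens]; exact hd1
    · rw [hdens]; exact hd2
end

section
/- Suppose S is a nonempty finite set of positive integers, J is an interval of integers containing S, and r is a positive integer with r ≤ |J|. Then there exist a subset S' ⊆ S and an interval I of integers of size r containing S' such that d_I(S') ≥ d_J(S)/2. -/
/-- Lemma 4.3. If `S` is a nonempty finite set of positive integers,
`J` is an interval containing `S`, and `r ≤ |J|` is a positive integer, then there is a
subset `S' ⊆ S` and an interval `I` of size `r` containing `S'` with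
`d_I(S') ≥ d_J(S) / 2`. -/
theorem shrink_interval (S : Finset ℤ) (hS : S.Nonempty) (hpos : ∀ s ∈ S, 0 < s)
    (a b : ℤ) (hSJ : S ⊆ Finset.Icc a b)
    (r : ℕ) (hr : 0 < r) (hrJ : r ≤ (Finset.Icc a b).card) :
    ∃ (S' : Finset ℤ) (a' b' : ℤ),
      S' ⊆ S ∧ S' ⊆ Finset.Icc a' b' ∧ (Finset.Icc a' b').card = r ∧
      dens (Finset.Icc a b) S / 2 ≤ dens (Finset.Icc a' b') S' := by
  obtain ⟨s₀, hs₀⟩ := hS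
  obtain ⟨ha0, hb0⟩ := Finset.mem_Icc.mp (hSJ hs₀)
  have hab : a ≤ b := le_trans ha0 hb0
  set n := (Finset.Icc a b).card with hn
  have hncard : (n : ℤ) = b + 1 - a := by
    rw [hn, Int.card_Icc, Int.toNat_of_nonneg (by omega)]
  have hnpos : 0 < n := lt_of_lt_of_le hr hrJ
  obtain ⟨m, t, hmt, htr⟩ : ∃ m t, n + r - 1 = m * r + t ∧ t < r :=
    ⟨(n + r - 1) / r, (n + r - 1) % r, by rw [Nat.mul_comm]; exact (Nat.div_add_mod _ _).symm, Nat.mod_lt _ hr⟩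
  have h1 : n ≤ m * r := by omega
  have h2 : m * r ≤ 2 * n := by omega
  have hmpos : 0 < m := by
    rcases Nat.eq_zero_or_pos m with h | h
    · subst h; simp only [Nat.zero_mul] at h1; omega
    · exact h
  have hrz : (0:ℤ) < (r:ℤ) := by exact_mod_cast hr
  set f : ℤ → ℕ := fun s => ((s - a) / (r:ℤ)).toNat with hf
  have hmaps : ∀ s ∈ S, f s ∈ Finset.range m := by
    intro s hs
    obtain ⟨ha, hb⟩ := Finset.mem_Icc.mp (hSJ hs)
    have h0 : 0 ≤ (s - a) / (r:ℤ) := Int.ediv_nonneg (by omega) (le_of_lt hrz)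
    have hlt : (s - a) / (r:ℤ) < (m:ℤ) := by
      rw [Int.ediv_lt_iff_lt_mul hrz]
      have hn1 : (n:ℤ) ≤ (m:ℤ) * (r:ℤ) := by exact_mod_cast h1
      omega
    simp only [Finset.mem_range, hf]
    omega
  have hsum : S.card = ∑ y ∈ Finset.range m, (S.filter fun s => f s = y).card :=
    Finset.card_eq_sum_card_fiberwise hmaps
  have hexists : ∃ y ∈ Finset.range m, S.card ≤ m * (S.filter fun s => f s = y).card := by
    apply Finset.exists_le_of_sum_le (Finset.nonempty_range_iff.mpr hmpos.ne')
    rw [← Finset.mul_sum, ← hsum, Finset.sum_const, Finset.card_range, smul_eq_mul]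
  obtain ⟨y, hy, hcard⟩ := hexists
  refine ⟨S.filter fun s => f s = y, a + y * r, a + y * r + r - 1,
    Finset.filter_subset _ _, ?_, ?_, ?_⟩
  · intro s hs
    obtain ⟨hsS, hfs⟩ := Finset.mem_filter.mp hs
    obtain ⟨ha, hb⟩ := Finset.mem_Icc.mp (hSJ hsS)
    have h0 : 0 ≤ (s - a) / (r:ℤ) := Int.ediv_nonneg (by omega) (le_of_lt hrz)
    have hq : (s - a) / (r:ℤ) = (y:ℤ) := by
      simp only [hf] at hfs; omega
    have hde : (y:ℤ) * (r:ℤ) + (s - a) % (r:ℤ) = s - a := by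
      have h := Int.mul_ediv_add_emod (s - a) (r:ℤ)
      rw [hq] at h
      linarith
    have hm0 : 0 ≤ (s - a) % (r:ℤ) := Int.emod_nonneg _ (by omega)
    have hm1 : (s - a) % (r:ℤ) < (r:ℤ) := Int.emod_lt_of_pos _ hrz
    simp only [Finset.mem_Icc]
    constructor <;> linarith
  · rw [Int.card_Icc]
    have : a + ↑y * ↑r + ↑r - 1 + 1 - (a + ↑y * ↑r) = (r:ℤ) := by ring
    rw [this, Int.toNat_natCast]
  · have hIc : (Finset.Icc (a + ↑y * ↑r) (a + ↑y * ↑r + ↑r - 1)).card = r := by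
      rw [Int.card_Icc]
      have : a + ↑y * ↑r + ↑r - 1 + 1 - (a + ↑y * ↑r) = (r:ℤ) := by ring
      rw [this, Int.toNat_natCast]
    unfold dens
    rw [hIc, ← hn]
    set c := (S.filter fun s => f s = y).card with hc'
    have key : S.card * r ≤ 2 * n * c := by
      calc S.card * r ≤ m * c * r := Nat.mul_le_mul_right r hcard
        _ = m * r * c := by ring
        _ ≤ 2 * n * c := Nat.mul_le_mul_right c h2
    rw [div_div, div_le_div_iff₀ (by positivity) (by exact_mod_cast hr)]
    have : (S.card : ℝ) * r ≤ 2 * n * c := by exact_mod_cast key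
    nlinarith [this]
end

section
/- For a positive integer k ≥ 1, consider the 2-coloring of the edges of the complete graph on the vertex set {1, 2, ..., 4^(k-1)} in which the edge (i, j) with i < j receives the color given by the parity of ⌊log₂(j - i)⌋. This coloring contains no convex monochromatic clique of order k + 1. -/
/-- Proposition 6.2. For `k ≥ 1`, the 2-coloring of the edges of the
complete graph on `{1, ..., 4^(k-1)}` in which the edge `(i, j)` with `i < j` receives
the parity of `⌊log₂ (j - i)⌋` contains no convex monochromatic clique of order `k+1`. -/
theorem no_convex_monochromatic_clique (k : ℕ) (hk : 1 ≤ k) :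
    ¬ ∃ a : ℕ → ℕ,
      (∀ i, 1 ≤ i → i ≤ k + 1 → a i ∈ Finset.Icc 1 (4 ^ (k - 1))) ∧
      (∀ i, 1 ≤ i → i < k + 1 → a i < a (i + 1)) ∧
      (∀ i, 1 ≤ i → i + 2 ≤ k + 1 → a (i + 1) - a i < a (i + 2) - a (i + 1)) ∧
      (∃ pr : ℕ, ∀ i j, 1 ≤ i → i < j → j ≤ k + 1 →
        Nat.log 2 (a j - a i) % 2 = pr) := by
  rintro ⟨a, hmem, hmono, hconv, pr, hcol⟩
  have key : ∀ i, 1 ≤ i → i ≤ k → 2 * (i - 1) ≤ Nat.log 2 (a (i + 1) - a i) := by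
    intro i h1 h2
    induction i with
    | zero => omega
    | succ n ih =>
      rcases Nat.eq_zero_or_pos n with hn0 | hn1
      · subst hn0; simp
      · have hn2 : n ≤ k := by omega
        have ihn := ih hn1 hn2
        have hxy : a n < a (n + 1) := hmono n hn1 (by omega)
        have hyz : a (n + 1) < a (n + 2) := hmono (n + 1) (by omega) (by omega)
        have hd12 : a (n + 1) - a n < a (n + 2) - a (n + 1) :=
          hconv n hn1 (by omega)
        set d1 := a (n + 1) - a n with hd1def
        set d2 := a (n + 2) - a (n + 1) with hd2def
        have hsum : a (n + 2) - a n = d1 + d2 := by omega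
        have hd1pos : 0 < d1 := by omega
        have hd2pos : 0 < d2 := by omega
        set t := Nat.log 2 d1 with ht
        set u := Nat.log 2 d2 with hu
        set s := Nat.log 2 (a (n + 2) - a n) with hs
        have hpt : t % 2 = pr := hcol n (n + 1) hn1 (by omega) (by omega)
        have hpu : u % 2 = pr := hcol (n + 1) (n + 2) (by omega) (by omega) (by omega)
        have hps : s % 2 = pr := hcol n (n + 2) hn1 (by omega) (by omega)
        have hus : u ≤ s := by
          rw [hs, hsum]; exact Nat.log_mono_right (by omega)
        have hd2u : d2 < 2 ^ (u + 1) := Nat.lt_pow_succ_log_self (by norm_num) d2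
        have hsu : s < u + 2 := by
          apply Nat.log_lt_of_lt_pow (by omega)
          rw [hsum]
          calc d1 + d2 < 2 * d2 := by omega
            _ < 2 * 2 ^ (u + 1) := by omega
            _ = 2 ^ (u + 2) := by ring
        have hseq : s = u := by omega
        have hlt : a (n + 2) - a n < 2 ^ (u + 1) := by
          have := Nat.lt_pow_succ_log_self (b := 2) (by norm_num) (a (n + 2) - a n)
          rwa [← hs, hseq] at this
        have h2t : 2 ^ t ≤ d1 := Nat.pow_log_le_self 2 (by omega)
        have h2u : 2 ^ u ≤ d2 := Nat.pow_log_le_self 2 (by omega)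
        have htu : 2 ^ t < 2 ^ u := by
          have h2u1 : 2 ^ (u + 1) = 2 ^ u + 2 ^ u := by ring
          omega
        have htu' : t < u := by
          exact (Nat.pow_lt_pow_iff_right (by norm_num)).mp htu
        omega
  have hlogk := key k hk le_rfl
  have hdk : 2 ^ (2 * (k - 1)) ≤ a (k + 1) - a k := by
    calc 2 ^ (2 * (k - 1)) ≤ 2 ^ Nat.log 2 (a (k + 1) - a k) :=
          Nat.pow_le_pow_right (by norm_num) hlogk
      _ ≤ a (k + 1) - a k := Nat.pow_log_le_self 2
          (by have := hmono k hk (by omega); omega)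
  have h4 : (4 : ℕ) ^ (k - 1) = 2 ^ (2 * (k - 1)) := by
    rw [pow_mul]; norm_num
  have hub := hmem (k + 1) (by omega) le_rfl
  have hlb := hmem k hk (by omega)
  rw [Finset.mem_Icc] at hub hlb
  rw [h4] at hub
  omega
end

section
/- For a positive integer k ≥ 1, consider the 2-coloring of the edges of the complete graph on the vertex set {1, 2, ..., 4^(k-1)} in which the edge (i, j) with i < j receives the color given by the parity of ⌊log₂(j - i)⌋. Then there is no convex sequence a₁ < a₂ < ... < a_{k+1} of vertices such that all edges (a_i, a_j) with 1 ≤ |j - i| ≤ 2 receive the same color. -/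
lemma key_log_step (d e : ℕ) (hd : 1 ≤ d) (hde : d < e)
    (h1 : Nat.log 2 d % 2 = Nat.log 2 e % 2)
    (h2 : Nat.log 2 (d + e) % 2 = Nat.log 2 e % 2) :
    Nat.log 2 d + 2 ≤ Nat.log 2 e := by
  have hlm : Nat.log 2 d ≤ Nat.log 2 e := Nat.log_mono_right hde.le
  rcases eq_or_lt_of_le hlm with h | h
  · exfalso
    have hd2 : 2 ^ Nat.log 2 d ≤ d := Nat.pow_log_le_self 2 (by omega)
    have he2 : e < 2 ^ (Nat.log 2 e + 1) := Nat.lt_pow_succ_log_self (by norm_num) e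
    have hsum : Nat.log 2 (d + e) = Nat.log 2 d + 1 := by
      apply Nat.log_eq_of_pow_le_of_lt_pow
      · have : 2 ^ Nat.log 2 d ≤ e := le_trans hd2 hde.le
        rw [pow_succ]
        omega
      · rw [← h] at he2
        have hd3 : d < 2 ^ (Nat.log 2 d + 1) := Nat.lt_pow_succ_log_self (by norm_num) d
        rw [pow_succ, pow_succ] at *
        omega
    omega
  · omega

/-- For `k ≥ 1`, in the 2-coloring of the edges of the complete graph
on `{1, ..., 4^(k-1)}` in which the edge `(i, j)` with `i < j` receives the parity of
`⌊log₂ (j - i)⌋`, there is no convex sequence `a₁ < ... < a_{k+1}` of vertices such that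
all edges `(a_i, a_j)` with `1 ≤ |j - i| ≤ 2` receive the same color. -/
theorem no_convex_monochromatic_path_square (k : ℕ) (hk : 1 ≤ k) :
    ¬ ∃ a : ℕ → ℕ,
      (∀ i, 1 ≤ i → i ≤ k + 1 → a i ∈ Finset.Icc 1 (4 ^ (k - 1))) ∧
      (∀ i, 1 ≤ i → i < k + 1 → a i < a (i + 1)) ∧
      (∀ i, 1 ≤ i → i + 2 ≤ k + 1 → a (i + 1) - a i < a (i + 2) - a (i + 1)) ∧
      (∃ pr : ℕ, ∀ i j, 1 ≤ i → i < j → j ≤ k + 1 → j - i ≤ 2 →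
        Nat.log 2 (a j - a i) % 2 = pr) := by
  rintro ⟨a, hmem, hmono, hconv, pr, hpr⟩
  have claim : ∀ i, 1 ≤ i → i ≤ k → 2 * (i - 1) ≤ Nat.log 2 (a (i + 1) - a i) := by
    intro i
    induction i with
    | zero => omega
    | succ n ih =>
      intro _ hnk
      show 2 * (n + 1 - 1) ≤ Nat.log 2 (a (n + 2) - a (n + 1))
      rcases Nat.lt_or_ge n 1 with h1 | h1
      · have : n = 0 := by omega
        subst this
        simp
      · have ihn := ih h1 (by omega)
        have hlt1 : a n < a (n + 1) := hmono n h1 (by omega)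
        have hlt2 : a (n + 1) < a (n + 2) := hmono (n + 1) (by omega) (by omega)
        have hc : a (n + 1) - a n < a (n + 2) - a (n + 1) := hconv n h1 (by omega)
        have p1 := hpr n (n + 1) h1 (by omega) (by omega) (by omega)
        have p2 := hpr (n + 1) (n + 2) (by omega) (by omega) (by omega) (by omega)
        have p3 := hpr n (n + 2) h1 (by omega) (by omega) (by omega)
        have hsum : a (n + 2) - a n = (a (n + 1) - a n) + (a (n + 2) - a (n + 1)) := by omega
        rw [hsum] at p3
        have := key_log_step (a (n + 1) - a n) (a (n + 2) - a (n + 1)) (by omega) hc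
          (by omega) (by omega)
        omega
  have hk' := claim k hk le_rfl
  have hlt : a k < a (k + 1) := hmono k hk (by omega)
  have h1 : (2 : ℕ) ^ (2 * (k - 1)) ≤ a (k + 1) - a k :=
    le_trans (Nat.pow_le_pow_right (by norm_num) hk') (Nat.pow_log_le_self 2 (by omega))
  have hak : 1 ≤ a k := (Finset.mem_Icc.mp (hmem k hk (by omega))).1
  have hak1 : a (k + 1) ≤ 4 ^ (k - 1) := (Finset.mem_Icc.mp (hmem (k + 1) (by omega) le_rfl)).2
  have h4 : (4 : ℕ) ^ (k - 1) = 2 ^ (2 * (k - 1)) := by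
    rw [show (4 : ℕ) = 2 ^ 2 from rfl, ← pow_mul]
  omega
end

section
/- Consider the 2-coloring of the edges of the complete graph on the positive integers in which the edge (i, j) with i < j receives the color given by the parity of ⌊log₂(j - i)⌋. Then there is no monochromatic clique with vertices a₁ < a₂ < a₃ < a₄ < a₅ < a₆ < a₇ such that a₅ - a₃ is the largest of the second differences a₃ - a₁, a₄ - a₂, a₅ - a₃, a₆ - a₄, a₇ - a₅ (i.e., a₅ - a₃ ≥ each of the others) and a₄ - a₂ and a₆ - a₄ are the two smallest second differences (i.e., each of a₄ - a₂ and a₆ - a₄ is at most each of a₃ - a₁, a₅ - a₃, a₇ - a₅). -/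
private lemma log_lt_imp_lt {x y : ℕ} (h : Nat.log 2 x < Nat.log 2 y) : x < y := by
  have hy : y ≠ 0 := by rintro rfl; simp at h
  calc x < 2 ^ (Nat.log 2 x + 1) := Nat.lt_pow_succ_log_self one_lt_two x
    _ ≤ 2 ^ Nat.log 2 y := Nat.pow_le_pow_right (by norm_num) h
    _ ≤ y := Nat.pow_log_le_self 2 hy

private lemma log_ne {x y pr : ℕ} (hx : 0 < x) (hy : 0 < y)
    (h1 : Nat.log 2 x % 2 = pr) (h3 : Nat.log 2 (x + y) % 2 = pr)
    (heq : Nat.log 2 x = Nat.log 2 y) : False := by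
  have hx1 : 2 ^ Nat.log 2 x ≤ x := Nat.pow_log_le_self 2 hx.ne'
  have hy1 : 2 ^ Nat.log 2 x ≤ y := by rw [heq]; exact Nat.pow_log_le_self 2 hy.ne'
  have hx2 : x < 2 ^ (Nat.log 2 x + 1) := Nat.lt_pow_succ_log_self one_lt_two x
  have hy2 : y < 2 ^ (Nat.log 2 x + 1) := by
    rw [heq]; exact Nat.lt_pow_succ_log_self one_lt_two y
  have hsum : Nat.log 2 (x + y) = Nat.log 2 x + 1 := by
    refine Nat.log_eq_of_pow_le_of_lt_pow ?_ ?_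
    · have : 2 ^ (Nat.log 2 x + 1) = 2 ^ Nat.log 2 x + 2 ^ Nat.log 2 x := by ring
      omega
    · have : 2 ^ (Nat.log 2 x + 1 + 1) = 2 ^ (Nat.log 2 x + 1) + 2 ^ (Nat.log 2 x + 1) := by
        ring
      omega
  omega

private lemma log_add_eq {x y pr : ℕ} (hy : 0 < y)
    (h1 : Nat.log 2 x % 2 = pr) (h3 : Nat.log 2 (x + y) % 2 = pr)
    (hlt : Nat.log 2 y < Nat.log 2 x) : Nat.log 2 (x + y) = Nat.log 2 x := by
  have hxu : x < 2 ^ (Nat.log 2 x + 1) := Nat.lt_pow_succ_log_self one_lt_two x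
  have hyu : y < 2 ^ (Nat.log 2 y + 1) := Nat.lt_pow_succ_log_self one_lt_two y
  have hmono : 2 ^ (Nat.log 2 y + 1) ≤ 2 ^ (Nat.log 2 x + 1) :=
    Nat.pow_le_pow_right (by norm_num) (by omega)
  have hupp : x + y < 2 ^ (Nat.log 2 x + 2) := by
    have h4 : 2 ^ (Nat.log 2 x + 2) = 2 ^ (Nat.log 2 x + 1) + 2 ^ (Nat.log 2 x + 1) := by
      ring
    omega
  have hlow : Nat.log 2 x ≤ Nat.log 2 (x + y) := Nat.log_mono_right (Nat.le_add_right x y)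
  have hupp' : Nat.log 2 (x + y) < Nat.log 2 x + 2 :=
    Nat.log_lt_of_lt_pow (by omega) hupp
  omega

private lemma log_ne' {x y z pr : ℕ} (hx : 0 < x) (hy : 0 < y) (hz : x + y = z)
    (h1 : Nat.log 2 x % 2 = pr) (h3 : Nat.log 2 z % 2 = pr) :
    Nat.log 2 x ≠ Nat.log 2 y := fun heq => log_ne hx hy h1 (hz ▸ h3) heq

private lemma log_sum_eq {x y z pr : ℕ} (hy : 0 < y) (hz : x + y = z)
    (h1 : Nat.log 2 x % 2 = pr) (h3 : Nat.log 2 z % 2 = pr)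
    (hlt : Nat.log 2 y < Nat.log 2 x) : Nat.log 2 z = Nat.log 2 x := by
  subst hz; exact log_add_eq hy h1 h3 hlt

set_option maxHeartbeats 1600000 in
private lemma core {b0 b1 b2 b3 b4 b5 b6 pr : ℕ}
    (h01 : b0 < b1) (h12 : b1 < b2) (h23 : b2 < b3) (h34 : b3 < b4)
    (h45 : b4 < b5) (h56 : b5 < b6)
    (c12' : Nat.log 2 (b2 - b1) % 2 = pr) (c23' : Nat.log 2 (b3 - b2) % 2 = pr)
    (c34' : Nat.log 2 (b4 - b3) % 2 = pr) (c45' : Nat.log 2 (b5 - b4) % 2 = pr)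
    (c02' : Nat.log 2 (b2 - b0) % 2 = pr) (c13' : Nat.log 2 (b3 - b1) % 2 = pr)
    (c24' : Nat.log 2 (b4 - b2) % 2 = pr) (c35' : Nat.log 2 (b5 - b3) % 2 = pr)
    (c46' : Nat.log 2 (b6 - b4) % 2 = pr) (c04' : Nat.log 2 (b4 - b0) % 2 = pr)
    (c26' : Nat.log 2 (b6 - b2) % 2 = pr)
    (hA0 : b2 - b0 ≤ b4 - b2) (hA2 : b5 - b3 ≤ b4 - b2) (hA3 : b6 - b4 ≤ b4 - b2)
    (hB0 : b3 - b1 ≤ b2 - b0) (hB1 : b3 - b1 ≤ b4 - b2) (hB5 : b5 - b3 ≤ b6 - b4) :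
    False := by
  have pg1 : 0 < b2 - b1 := by omega
  have pg2 : 0 < b3 - b2 := by omega
  have pg3 : 0 < b4 - b3 := by omega
  have pg4 : 0 < b5 - b4 := by omega
  have ps0 : 0 < b2 - b0 := by omega
  have ps2 : 0 < b4 - b2 := by omega
  have ps4 : 0 < b6 - b4 := by omega
  have hne23 : Nat.log 2 (b3 - b2) ≠ Nat.log 2 (b4 - b3) :=
    log_ne' pg2 pg3 (by omega) c23' c24'
  rcases hne23.lt_or_gt with h | h
  · have hs2 : Nat.log 2 (b4 - b2) = Nat.log 2 (b4 - b3) :=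
      log_sum_eq pg2 (by omega) c34' c24' h
    have hne34 : Nat.log 2 (b4 - b3) ≠ Nat.log 2 (b5 - b4) :=
      log_ne' pg3 pg4 (by omega) c34' c35'
    have hlt43 : Nat.log 2 (b5 - b4) < Nat.log 2 (b4 - b3) := by
      rcases hne34.lt_or_gt with h2 | h2
      · have hs3 : Nat.log 2 (b5 - b3) = Nat.log 2 (b5 - b4) :=
          log_sum_eq pg3 (by omega) c45' c35' h2
        have := Nat.log_mono_right (b := 2) hA2
        omega
      · exact h2
    have hs3 : Nat.log 2 (b5 - b3) = Nat.log 2 (b4 - b3) :=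
      log_sum_eq pg4 (by omega) c34' c35' hlt43
    have hls : Nat.log 2 (b5 - b3) ≤ Nat.log 2 (b6 - b4) := Nat.log_mono_right hB5
    have hne24 : Nat.log 2 (b4 - b2) ≠ Nat.log 2 (b6 - b4) :=
      log_ne' ps2 ps4 (by omega) c24' c26'
    have : b4 - b2 < b6 - b4 := log_lt_imp_lt (by omega)
    omega
  · have hs2 : Nat.log 2 (b4 - b2) = Nat.log 2 (b3 - b2) :=
      log_sum_eq pg3 (by omega) c23' c24' h
    have hne12 : Nat.log 2 (b2 - b1) ≠ Nat.log 2 (b3 - b2) :=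
      log_ne' pg1 pg2 (by omega) c12' c13'
    have hlt12 : Nat.log 2 (b2 - b1) < Nat.log 2 (b3 - b2) := by
      rcases hne12.lt_or_gt with h2 | h2
      · exact h2
      · have hs1 : Nat.log 2 (b3 - b1) = Nat.log 2 (b2 - b1) :=
          log_sum_eq pg2 (by omega) c12' c13' h2
        have := Nat.log_mono_right (b := 2) hB1
        omega
    have hs1 : Nat.log 2 (b3 - b1) = Nat.log 2 (b3 - b2) :=
      log_sum_eq pg1 (by omega) c23' c13' hlt12
    have hls : Nat.log 2 (b3 - b1) ≤ Nat.log 2 (b2 - b0) := Nat.log_mono_right hB0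
    have hne02 : Nat.log 2 (b2 - b0) ≠ Nat.log 2 (b4 - b2) :=
      log_ne' ps0 ps2 (by omega) c02' c04'
    have : b4 - b2 < b2 - b0 := log_lt_imp_lt (by omega)
    omega

/-- In the 2-coloring of the edges of the complete graph on the
positive integers in which the edge `(i, j)` with `i < j` receives the parity of
`⌊log₂ (j - i)⌋`, there is no monochromatic clique `a₁ < ... < a₇` such that `a₅ - a₃`
is the largest second difference and `a₄ - a₂`, `a₆ - a₄` are the two smallest second
differences. (Indices below are 0-based: `a i` stands for `a_{i+1}`.) -/
theorem no_monochromatic_clique_with_second_difference_order :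
    ¬ ∃ a : Fin 7 → ℕ, StrictMono a ∧ (∀ i, 0 < a i) ∧
      (∃ pr : ℕ, ∀ i j : Fin 7, i < j → Nat.log 2 (a j - a i) % 2 = pr) ∧
      (a 2 - a 0 ≤ a 4 - a 2 ∧ a 3 - a 1 ≤ a 4 - a 2 ∧
       a 5 - a 3 ≤ a 4 - a 2 ∧ a 6 - a 4 ≤ a 4 - a 2) ∧
      (a 3 - a 1 ≤ a 2 - a 0 ∧ a 3 - a 1 ≤ a 4 - a 2 ∧ a 3 - a 1 ≤ a 6 - a 4 ∧
       a 5 - a 3 ≤ a 2 - a 0 ∧ a 5 - a 3 ≤ a 4 - a 2 ∧ a 5 - a 3 ≤ a 6 - a 4) := by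
  rintro ⟨a, hmono, hpos, ⟨pr, hcol⟩, ⟨hA0, hA1, hA2, hA3⟩, hB0, hB1, hB2, hB3, hB4, hB5⟩
  exact core (hmono (by decide)) (hmono (by decide)) (hmono (by decide))
    (hmono (by decide)) (hmono (by decide)) (hmono (by decide))
    (hcol 1 2 (by decide)) (hcol 2 3 (by decide)) (hcol 3 4 (by decide))
    (hcol 4 5 (by decide)) (hcol 0 2 (by decide)) (hcol 1 3 (by decide))
    (hcol 2 4 (by decide)) (hcol 3 5 (by decide)) (hcol 4 6 (by decide))
    (hcol 0 4 (by decide)) (hcol 2 6 (by decide))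
    hA0 hA2 hA3 hB0 hB1 hB5
end

section
/- For every natural number n there exists a 2-coloring of the complete 3-uniform hypergraph on the vertex set {r₃(1), r₃(1)+1, ..., n} such that every monochromatic clique S satisfies ∑_{i ∈ S} 1/ρ₃(i) ≤ 4. -/
/-- A subset `S` of `Fin n` is monochromatic with respect to a coloring `c` of triples
if all triples `i < j < l` from `S` receive the same color. -/
def MonoTripleClique (n : ℕ) (c : Fin n → Fin n → Fin n → Bool) (S : Finset (Fin n)) :
    Prop :=
  ∃ clr : Bool, ∀ i ∈ S, ∀ j ∈ S, ∀ l ∈ S, i < j → j < l → c i j l = clr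

/-- `rho3 n` is the minimum, over all 2-colorings of the complete 3-uniform hypergraph
on `n` vertices, of the maximum size of a monochromatic clique; equivalently, the least
`m` such that some 2-coloring has all monochromatic cliques of size at most `m`. -/
noncomputable def rho3 (n : ℕ) : ℕ :=
  sInf { m | ∃ c : Fin n → Fin n → Fin n → Bool,
    ∀ S : Finset (Fin n), MonoTripleClique n c S → S.card ≤ m }

/-- The 3-uniform hypergraph Ramsey number `r3 t`: the least `n` such that every
2-coloring of the complete 3-uniform hypergraph on `n` vertices contains a
monochromatic clique of size `t`. -/
noncomputable def r3 (t : ℕ) : ℕ :=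
  sInf { n | ∀ c : Fin n → Fin n → Fin n → Bool,
    ∃ S : Finset (Fin n), MonoTripleClique n c S ∧ t ≤ S.card }

lemma rho3_set_nonempty (n : ℕ) : { m | ∃ c : Fin n → Fin n → Fin n → Bool,
    ∀ S : Finset (Fin n), MonoTripleClique n c S → S.card ≤ m }.Nonempty :=
  ⟨n, fun _ _ _ => true, fun S _ => by simpa using Finset.card_le_univ S⟩

lemma rho3_mem (n : ℕ) : ∃ c : Fin n → Fin n → Fin n → Bool,
    ∀ S : Finset (Fin n), MonoTripleClique n c S → S.card ≤ rho3 n :=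
  Nat.sInf_mem (rho3_set_nonempty n)

lemma rho3_zero : rho3 0 = 0 := by
  have : (0 : ℕ) ∈ { m | ∃ c : Fin 0 → Fin 0 → Fin 0 → Bool,
      ∀ S : Finset (Fin 0), MonoTripleClique 0 c S → S.card ≤ m } :=
    ⟨fun _ _ _ => true, fun S _ => by simpa using Finset.card_le_univ S⟩
  exact Nat.eq_zero_of_le_zero (Nat.sInf_le this)

lemma rho3_one_le (i : ℕ) (hi : 1 ≤ i) : 1 ≤ rho3 i := by
  obtain ⟨c, hc⟩ := rho3_mem i
  have := hc {⟨0, hi⟩} ⟨true, by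
    intro a ha b hb l hl hab hbl
    simp only [Finset.mem_singleton] at ha hb
    subst ha; subst hb; exact absurd hab (lt_irrefl _)⟩
  simpa using this

lemma rho3_mono : Monotone rho3 := by
  intro m n hmn
  obtain ⟨c, hc⟩ := rho3_mem n
  apply Nat.sInf_le
  refine ⟨fun i j l => c (Fin.castLE hmn i) (Fin.castLE hmn j) (Fin.castLE hmn l), ?_⟩
  rintro S ⟨clr, hclr⟩
  have := hc (S.map (Fin.castLEEmb hmn)) ⟨clr, ?_⟩
  · simpa using this
  · intro i hi j hj l hl hij hjl
    simp only [Finset.mem_map] at hi hj hl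
    obtain ⟨i', hi', rfl⟩ := hi
    obtain ⟨j', hj', rfl⟩ := hj
    obtain ⟨l', hl', rfl⟩ := hl
    rw [Fin.castLEEmb_apply, Fin.castLEEmb_apply] at hij hjl
    exact hclr i' hi' j' hj' l' hl' hij hjl

lemma r3_one : r3 1 = 1 := by
  have h1 : (1 : ℕ) ∈ { n | ∀ c : Fin n → Fin n → Fin n → Bool,
      ∃ S : Finset (Fin n), MonoTripleClique n c S ∧ 1 ≤ S.card } := by
    intro c
    refine ⟨{0}, ⟨true, ?_⟩, by simp⟩
    intro a ha b hb l hl hab hbl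
    simp only [Finset.mem_singleton] at ha hb
    subst ha; subst hb; exact absurd hab (lt_irrefl _)
  have h0 : (0 : ℕ) ∉ { n | ∀ c : Fin n → Fin n → Fin n → Bool,
      ∃ S : Finset (Fin n), MonoTripleClique n c S ∧ 1 ≤ S.card } := by
    intro h
    obtain ⟨S, _, hS⟩ := h (fun _ _ _ => true)
    have : S = ∅ := Finset.eq_empty_of_forall_notMem (fun x _ => x.elim0)
    simp [this] at hS
  refine le_antisymm (Nat.sInf_le h1) ?_
  rcases Nat.eq_zero_or_pos (sInf _) with h | h
  · exact absurd (h ▸ Nat.sInf_mem ⟨1, h1⟩) h0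
  · exact h

lemma exists_good_nat (m : ℕ) : ∃ g : ℕ → ℕ → ℕ → Bool,
    ∀ S : Finset ℕ, (∀ i ∈ S, i < m) →
    (∃ clr : Bool, ∀ i ∈ S, ∀ j ∈ S, ∀ l ∈ S, i < j → j < l → g i j l = clr) →
    S.card ≤ rho3 m := by
  obtain ⟨c, hc⟩ := rho3_mem m
  refine ⟨fun i j l => if h : i < m ∧ j < m ∧ l < m
      then c ⟨i, h.1⟩ ⟨j, h.2.1⟩ ⟨l, h.2.2⟩ else true, ?_⟩
  rintro S hSm ⟨clr, hclr⟩
  rw [← Finset.card_attachFin S hSm]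
  apply hc
  refine ⟨clr, ?_⟩
  intro a ha b hb l hl hab hbl
  rw [Finset.mem_attachFin] at ha hb hl
  have := hclr a ha b hb l hl hab hbl
  simp only [dif_pos (show (a:ℕ) < m ∧ (b:ℕ) < m ∧ (l:ℕ) < m from ⟨a.isLt, b.isLt, l.isLt⟩),
    Fin.eta] at this
  exact this

/-- Block index of a vertex: `⌊log₂ ρ₃(i)⌋`. -/
noncomputable def blkW (i : ℕ) : ℕ := Nat.log 2 (rho3 i)

lemma blkW_mono : Monotone blkW := fun _ _ h => Nat.log_mono_right (rho3_mono h)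

/-- Greatest `i ≤ n` with `ρ₃(i) < 2^(k+1)`. -/
noncomputable def Fk (n k : ℕ) : ℕ :=
  @Nat.findGreatest (fun i => rho3 i < 2 ^ (k + 1)) (Classical.decPred _) n

lemma Fk_spec (n k : ℕ) : rho3 (Fk n k) < 2 ^ (k + 1) :=
  @Nat.findGreatest_spec 0 (fun i => rho3 i < 2 ^ (k + 1)) (Classical.decPred _) n
    (Nat.zero_le n) (show rho3 0 < 2 ^ (k + 1) by rw [rho3_zero]; positivity)

lemma le_Fk {n k i : ℕ} (hi : i ≤ n) (h : rho3 i < 2 ^ (k + 1)) : i ≤ Fk n k :=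
  @Nat.le_findGreatest i (fun i => rho3 i < 2 ^ (k + 1)) (Classical.decPred _) n hi h

/-- Good coloring for block `k` (on vertices `< Fk n k`). -/
noncomputable def gBlk (n k : ℕ) : ℕ → ℕ → ℕ → Bool :=
  (exists_good_nat (Fk n k)).choose

lemma gBlk_spec (n k : ℕ) : ∀ S : Finset ℕ, (∀ i ∈ S, i < Fk n k) →
    (∃ clr : Bool, ∀ i ∈ S, ∀ j ∈ S, ∀ l ∈ S, i < j → j < l → gBlk n k i j l = clr) →
    S.card ≤ rho3 (Fk n k) :=
  (exists_good_nat (Fk n k)).choose_spec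

/-- The master coloring. -/
noncomputable def master (n : ℕ) : ℕ → ℕ → ℕ → Bool := fun i j l =>
  if blkW i = blkW j ∧ blkW j = blkW l then gBlk n (blkW i) i j l
  else decide (blkW i = blkW j)


/-- Section 6.3. For every `n` there is a 2-coloring of the complete
3-uniform hypergraph on `{r₃(1), ..., n}` such that every monochromatic clique `S`
satisfies `∑_{i ∈ S} 1 / ρ₃(i) ≤ 4`. -/
theorem hypergraph_weighted_counterexample (n : ℕ) :
    ∃ c : ℕ → ℕ → ℕ → Bool,
      ∀ S : Finset ℕ, S ⊆ Finset.Icc (r3 1) n →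
        (∃ clr : Bool, ∀ i ∈ S, ∀ j ∈ S, ∀ l ∈ S, i < j → j < l → c i j l = clr) →
        ∑ i ∈ S, (1 : ℝ) / (rho3 i : ℝ) ≤ 4 := by
  classical
  refine ⟨master n, ?_⟩
  rintro S hsub ⟨clr, hclr⟩
  have hin : ∀ i ∈ S, 1 ≤ i ∧ i ≤ n := by
    intro i hi
    have := hsub hi
    rwa [Finset.mem_Icc, r3_one] at this
  have hrpos : ∀ i ∈ S, 1 ≤ rho3 i := fun i hi => rho3_one_le i (hin i hi).1
  -- weight bound by block
  have hw : ∀ i ∈ S, (1 : ℝ) / (rho3 i : ℝ) ≤ (1 / 2) ^ blkW i := by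
    intro i hi
    have h1 : (2 : ℕ) ^ blkW i ≤ rho3 i :=
      Nat.pow_log_le_self 2 (by have := hrpos i hi; omega)
    have h2 : ((2 : ℝ)) ^ blkW i ≤ (rho3 i : ℝ) := by exact_mod_cast h1
    have h3 : (0 : ℝ) < (2 : ℝ) ^ blkW i := by positivity
    calc (1 : ℝ) / (rho3 i : ℝ) ≤ 1 / (2 : ℝ) ^ blkW i :=
          one_div_le_one_div_of_le h3 h2
      _ = (1 / 2) ^ blkW i := by rw [div_pow, one_pow]
  have hwnn : ∀ i ∈ S, (0 : ℝ) ≤ (1 : ℝ) / (rho3 i : ℝ) := by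
    intro i hi; positivity
  set T := S.image blkW with hT
  have hfib : ∑ i ∈ S, (1 : ℝ) / (rho3 i : ℝ)
      = ∑ k ∈ T, ∑ i ∈ S.filter (fun i => blkW i = k), (1 : ℝ) / (rho3 i : ℝ) :=
    (Finset.sum_fiberwise_of_maps_to (fun i hi => Finset.mem_image_of_mem _ hi) _).symm
  -- cardinality bound for each block
  have hcard : ∀ k, (S.filter (fun i => blkW i = k)).card ≤ 2 ^ (k + 1) := by
    intro k
    set Sk := S.filter (fun i => blkW i = k) with hSk
    have hmemk : ∀ i ∈ Sk, i ∈ S ∧ blkW i = k := by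
      intro i hi; rw [hSk, Finset.mem_filter] at hi; exact hi
    have hle : ∀ i ∈ Sk, i ≤ Fk n k := by
      intro i hi
      obtain ⟨hiS, hik⟩ := hmemk i hi
      refine le_Fk (hin i hiS).2 ?_
      rw [← hik]
      exact Nat.lt_pow_succ_log_self one_lt_two _
    set Sk' := Sk.filter (fun i => i < Fk n k) with hSk'
    have h1 : Sk'.card ≤ rho3 (Fk n k) := by
      apply gBlk_spec n k
      · intro i hi; rw [hSk', Finset.mem_filter] at hi; exact hi.2
      · refine ⟨clr, ?_⟩
        intro i hi j hj l hl hij hjl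
        rw [hSk', Finset.mem_filter] at hi hj hl
        obtain ⟨hiS, hik⟩ := hmemk i hi.1
        obtain ⟨hjS, hjk⟩ := hmemk j hj.1
        obtain ⟨hlS, hlk⟩ := hmemk l hl.1
        have := hclr i hiS j hjS l hlS hij hjl
        rw [master] at this
        rw [if_pos ⟨by rw [hik, hjk], by rw [hjk, hlk]⟩] at this
        rwa [hik] at this
    have h2 : Sk ⊆ Sk' ∪ {Fk n k} := by
      intro i hi
      rcases lt_or_eq_of_le (hle i hi) with h | h
      · exact Finset.mem_union_left _ (by rw [hSk', Finset.mem_filter]; exact ⟨hi, h⟩)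
      · exact Finset.mem_union_right _ (by simp [h])
    calc Sk.card ≤ (Sk' ∪ {Fk n k}).card := Finset.card_le_card h2
      _ ≤ Sk'.card + 1 := by
          refine (Finset.card_union_le _ _).trans ?_
          simp
      _ ≤ rho3 (Fk n k) + 1 := by omega
      _ ≤ 2 ^ (k + 1) := by have := Fk_spec n k; omega
  -- weight bound for a full block
  have hblk2 : ∀ k, ∑ i ∈ S.filter (fun i => blkW i = k), (1 : ℝ) / (rho3 i : ℝ) ≤ 2 := by
    intro k
    have hb : ∀ i ∈ S.filter (fun i => blkW i = k), (1 : ℝ) / (rho3 i : ℝ) ≤ (1 / 2) ^ k := by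
      intro i hi
      rw [Finset.mem_filter] at hi
      calc (1 : ℝ) / (rho3 i : ℝ) ≤ (1 / 2) ^ blkW i := hw i hi.1
        _ = (1 / 2) ^ k := by rw [hi.2]
    calc ∑ i ∈ S.filter (fun i => blkW i = k), (1 : ℝ) / (rho3 i : ℝ)
        ≤ (S.filter (fun i => blkW i = k)).card • ((1 : ℝ) / 2) ^ k :=
          Finset.sum_le_card_nsmul _ _ _ hb
      _ = ((S.filter (fun i => blkW i = k)).card : ℝ) * (1 / 2) ^ k := by
          rw [nsmul_eq_mul]
      _ ≤ (2 ^ (k + 1) : ℝ) * (1 / 2) ^ k := by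
          apply mul_le_mul_of_nonneg_right _ (by positivity)
          exact_mod_cast hcard k
      _ = 2 := by
          rw [pow_succ, div_pow, one_pow, mul_comm ((2:ℝ)^k) 2, mul_assoc,
            mul_one_div, div_self (by positivity)]
          ring
  -- weight bound for a near-singleton block
  have hblk1 : ∀ k, (S.filter (fun i => blkW i = k)).card ≤ 1 →
      ∑ i ∈ S.filter (fun i => blkW i = k), (1 : ℝ) / (rho3 i : ℝ) ≤ (1 / 2) ^ k := by
    intro k hk
    have hb : ∀ i ∈ S.filter (fun i => blkW i = k), (1 : ℝ) / (rho3 i : ℝ) ≤ (1 / 2) ^ k := by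
      intro i hi
      rw [Finset.mem_filter] at hi
      calc (1 : ℝ) / (rho3 i : ℝ) ≤ (1 / 2) ^ blkW i := hw i hi.1
        _ = (1 / 2) ^ k := by rw [hi.2]
    calc ∑ i ∈ S.filter (fun i => blkW i = k), (1 : ℝ) / (rho3 i : ℝ)
        ≤ (S.filter (fun i => blkW i = k)).card • ((1 : ℝ) / 2) ^ k :=
          Finset.sum_le_card_nsmul _ _ _ hb
      _ ≤ 1 • ((1 : ℝ) / 2) ^ k := by
          apply nsmul_le_nsmul_left (by positivity) hk
      _ = (1 / 2) ^ k := one_nsmul _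
  -- geometric series bound
  have hgeom : ∀ F : Finset ℕ, ∑ k ∈ F, ((1 : ℝ) / 2) ^ k ≤ 2 := by
    intro F
    calc ∑ k ∈ F, ((1 : ℝ) / 2) ^ k
        ≤ ∑ k ∈ Finset.range (F.sup id + 1), ((1 : ℝ) / 2) ^ k := by
          apply Finset.sum_le_sum_of_subset_of_nonneg
          · intro k hk
            rw [Finset.mem_range]
            exact Nat.lt_succ_of_le (Finset.le_sup (f := id) hk)
          · intro k _ _; positivity
      _ ≤ 2 := sum_geometric_two_le _
  -- main case analysis
  rcases S.eq_empty_or_nonempty with hS | hS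
  · simp [hS]
  have hTne : T.Nonempty := hS.image blkW
  set K := if clr then T.min' hTne else T.max' hTne with hK
  have hKT : K ∈ T := by
    rw [hK]; split
    · exact T.min'_mem hTne
    · exact T.max'_mem hTne
  -- every non-K block is a near-singleton
  have hsingle : ∀ k ∈ T, k ≠ K → (S.filter (fun i => blkW i = k)).card ≤ 1 := by
    intro k hkT hkK
    by_contra hgt
    push_neg at hgt
    obtain ⟨i, hi, j, hj, hij⟩ := Finset.one_lt_card.mp hgt
    rw [Finset.mem_filter] at hi hj
    obtain ⟨x, hxS, hxk⟩ := Finset.mem_image.mp hKT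
    have hpair : ∀ a b : ℕ, a ∈ S → b ∈ S → blkW a = k → blkW b = k → a < b → False := by
      intro a b haS hbS hak hbk hab
      by_cases hc : clr = true
      · -- K is the min block, so K < k and x < a < b
        have hKk : K < k := by
          refine lt_of_le_of_ne ?_ (Ne.symm hkK)
          rw [hK, if_pos hc]
          exact T.min'_le k hkT
        have hxa : x < a := by
          by_contra h
          push_neg at h
          have := blkW_mono h
          rw [hak, hxk] at this
          omega
        have hm := hclr x hxS a haS b hbS hxa hab
        rw [master] at hm
        rw [if_neg (by rw [hxk, hak]; exact fun h => absurd h.1 hKk.ne)] at hm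
        rw [hc] at hm
        have : blkW x = blkW a := of_decide_eq_true hm
        rw [hxk, hak] at this
        exact hKk.ne this
      · -- clr = false; K is the max block, so k < K and a < b < x
        have hcf : clr = false := by
          cases clr
          · rfl
          · exact absurd rfl hc
        have hKk : k < K := by
          refine lt_of_le_of_ne ?_ hkK
          rw [hK, if_neg hc]
          exact T.le_max' k hkT
        have hbx : b < x := by
          by_contra h
          push_neg at h
          have := blkW_mono h
          rw [hbk, hxk] at this
          omega
        have hm := hclr a haS b hbS x hxS hab hbx
        rw [master] at hm
        rw [if_neg (by rw [hbk, hxk]; exact fun h => absurd h.2 hKk.ne)] at hm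
        rw [hcf] at hm
        have : decide (blkW a = blkW b) = true := by
          rw [hak, hbk]; simp
        rw [this] at hm
        exact Bool.noConfusion hm
    rcases hij.lt_or_gt with hlt | hlt
    · exact hpair i j hi.1 hj.1 hi.2 hj.2 hlt
    · exact hpair j i hj.1 hi.1 hj.2 hi.2 hlt
  -- final assembly
  rw [hfib, ← Finset.add_sum_erase T _ hKT]
  have hrest : ∑ k ∈ T.erase K, ∑ i ∈ S.filter (fun i => blkW i = k), (1 : ℝ) / (rho3 i : ℝ)
      ≤ ∑ k ∈ T.erase K, ((1 : ℝ) / 2) ^ k := by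
    apply Finset.sum_le_sum
    intro k hk
    exact hblk1 k (hsingle k (Finset.mem_of_mem_erase hk) (Finset.ne_of_mem_erase hk))
  have h4 : (4 : ℝ) = 2 + 2 := by norm_num
  rw [h4]
  exact add_le_add (hblk2 K) (hrest.trans (hgeom _))
end
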